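/- In any complete first-order theory T, Conant-forking coincides with Conant-dividing for formulas (a formula Conant-forks over M if and only if it Conant-divides over M), and Conant-independence ⫝^{K*} satisfies right extension: if a ⫝^{K*}_M b and c is any tuple, then there is a' ≡_{Mb} a with a' ⫝^{K*}_M bc. -/

import Mathlib

/- Common model-theoretic infrastructure for formalizing
   "NSOP₂ theories are NSOP₁" (arXiv:2206.08512).

   We work with a monster model `𝕄` of a complete theory: a sufficiently
   saturated and strongly homogeneous `L`-structure.  Tuples are functions
   `α → 𝕄`; sets of formulas with parameters are coded via `FmlP`. -/

open FirstOrder Language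

universe u v w

namespace NSOP2Paper

/-- A first-order formula in free variables `α ⊕ Fin n` together with an
`n`-tuple of parameters from `𝕄`. -/
abbrev FmlP (L : FirstOrder.Language.{u, u}) (𝕄 : Type u) (α : Type v) :=
  Σ n : ℕ, L.Formula (α ⊕ Fin n) × (Fin n → 𝕄)

/-- `a ≡_C b` : the tuples `a` and `b` satisfy the same formulas with
parameters from `C`. -/
def EqTpOver (L : FirstOrder.Language.{u, u}) {𝕄 : Type u} [L.Structure 𝕄] (C : Set 𝕄)
    {α : Type v} (a b : α → 𝕄) : Prop :=
  ∀ (n : ℕ) (φ : L.Formula (α ⊕ Fin n)) (c : Fin n → 𝕄), (∀ i, c i ∈ C) →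
    (φ.Realize (Sum.elim a c) ↔ φ.Realize (Sum.elim b c))

/-- `tp(a / C)` is finitely satisfiable in `Ms`: every formula over `C`
satisfied by `a` has a realization by a tuple from `Ms`. -/
def FinSatIn (L : FirstOrder.Language.{u, u}) {𝕄 : Type u} [L.Structure 𝕄] (Ms : Set 𝕄)
    {α : Type v} (a : α → 𝕄) (C : Set 𝕄) : Prop :=
  ∀ (n : ℕ) (φ : L.Formula (α ⊕ Fin n)) (c : Fin n → 𝕄), (∀ i, c i ∈ C) →
    φ.Realize (Sum.elim a c) →
    ∃ m : α → 𝕄, (∀ i, m i ∈ Ms) ∧ φ.Realize (Sum.elim m c)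

/-- `Ms` is the underlying set of a (small) elementary submodel of `𝕄`. -/
def IsElemSubmodel (L : FirstOrder.Language.{u, u}) {𝕄 : Type u} [L.Structure 𝕄] (Ms : Set 𝕄) : Prop :=
  ∃ S : L.ElementarySubstructure 𝕄, (S : Set 𝕄) = Ms

/-- A complete consistent global type (a complete type over the monster `𝕄`)
in variables `α`, coded as the set of formulas-with-parameters it contains. -/
structure GlobalType (L : FirstOrder.Language.{u, u}) (𝕄 : Type u) [L.Structure 𝕄] (α : Type v) where
  carrier : Set (FmlP L 𝕄 α)
  consistent : ∀ t : Finset (FmlP L 𝕄 α), ↑t ⊆ carrier →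
    ∃ a : α → 𝕄, ∀ p ∈ t, p.2.1.Realize (Sum.elim a p.2.2)
  complete : ∀ (n : ℕ) (φ : L.Formula (α ⊕ Fin n)) (c : Fin n → 𝕄),
    (⟨n, (φ, c)⟩ : FmlP L 𝕄 α) ∈ carrier ∨ (⟨n, (φ.not, c)⟩ : FmlP L 𝕄 α) ∈ carrier

variable {L : FirstOrder.Language.{u, u}} {𝕄 : Type u} [L.Structure 𝕄]

/-- The global type `q` is finitely satisfiable in `Ms` (i.e. it is a coheir of
its restriction to `Ms`). -/
def GlobalType.FinSatInM {α : Type v} (q : GlobalType L 𝕄 α) (Ms : Set 𝕄) : Prop :=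
  ∀ t : Finset (FmlP L 𝕄 α), ↑t ⊆ q.carrier →
    ∃ m : α → 𝕄, (∀ i, m i ∈ Ms) ∧ ∀ p ∈ t, p.2.1.Realize (Sum.elim m p.2.2)

/-- `a ⊨ q|_C` : the tuple `a` realizes the restriction of the global type `q`
to parameters from `C`. -/
def RealizesType {α : Type v} (q : GlobalType L 𝕄 α) (a : α → 𝕄) (C : Set 𝕄) : Prop :=
  ∀ (n : ℕ) (φ : L.Formula (α ⊕ Fin n)) (c : Fin n → 𝕄), (∀ i, c i ∈ C) →
    (⟨n, (φ, c)⟩ : FmlP L 𝕄 α) ∈ q.carrier → φ.Realize (Sum.elim a c)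

/-- The global type `q` extends `tp(a / C)`. -/
def ExtendsTpOver {α : Type v} (q : GlobalType L 𝕄 α) (C : Set 𝕄) (a : α → 𝕄) : Prop :=
  ∀ (n : ℕ) (φ : L.Formula (α ⊕ Fin n)) (c : Fin n → 𝕄), (∀ i, c i ∈ C) →
    φ.Realize (Sum.elim a c) → (⟨n, (φ, c)⟩ : FmlP L 𝕄 α) ∈ q.carrier

/-- `B` is a coheir Morley sequence over `Ms` in the global type `q`:
`q` is finitely satisfiable in `Ms` and `B i ⊨ q|_(Ms ∪ B_{<i})`. -/
def MorleyIn {α : Type v} (q : GlobalType L 𝕄 α) (Ms : Set 𝕄) (B : ℕ → α → 𝕄) : Prop :=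
  q.FinSatInM Ms ∧
    ∀ i : ℕ, RealizesType q (B i) (Ms ∪ ⋃ (j : ℕ) (_ : j < i), Set.range (B j))

/-- `B` is a coheir Morley sequence over `Ms`. -/
def CoheirMorley (L : FirstOrder.Language.{u, u}) {𝕄 : Type u} [L.Structure 𝕄] (Ms : Set 𝕄)
    {α : Type v} (B : ℕ → α → 𝕄) : Prop :=
  ∃ q : GlobalType L 𝕄 α, MorleyIn q Ms B

/-- Flatten an `ℕ`-indexed sequence of `α`-tuples into a single tuple. -/
def flatSeq {α : Type v} (I : ℕ → α → 𝕄) : ℕ × α → 𝕄 := fun p => I p.1 p.2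

/-- The sequence `I` is indiscernible over `C`. -/
def IndiscernibleOver (L : FirstOrder.Language.{u, u}) {𝕄 : Type u} [L.Structure 𝕄] (C : Set 𝕄)
    {α : Type v} (I : ℕ → α → 𝕄) : Prop :=
  ∀ (n : ℕ) (f g : Fin n → ℕ), StrictMono f → StrictMono g →
    EqTpOver L C (fun p : Fin n × α => I (f p.1) p.2) (fun p : Fin n × α => I (g p.1) p.2)

/-- `𝕄` is `κ`-saturated: every finitely satisfiable set of formulas in fewer
than `κ` variables over a parameter set of size `< κ` is realized in `𝕄`. -/
def IsSaturated (L : FirstOrder.Language.{u, u}) (𝕄 : Type u) [L.Structure 𝕄] (κ : Cardinal.{u}) : Prop :=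
  ∀ (α : Type u) (A : Set 𝕄), Cardinal.mk α < κ → Cardinal.mk A < κ →
    ∀ Γ : Set (FmlP L 𝕄 α), (∀ p ∈ Γ, ∀ i, p.2.2 i ∈ A) →
      (∀ t : Finset (FmlP L 𝕄 α), ↑t ⊆ Γ →
        ∃ a : α → 𝕄, ∀ p ∈ t, p.2.1.Realize (Sum.elim a p.2.2)) →
      ∃ a : α → 𝕄, ∀ p ∈ Γ, p.2.1.Realize (Sum.elim a p.2.2)

/-- `𝕄` is strongly `κ`-homogeneous: partial elementary maps between tuples of
length `< κ` extend to automorphisms of `𝕄`. -/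
def IsStronglyHomogeneous (L : FirstOrder.Language.{u, u}) (𝕄 : Type u) [L.Structure 𝕄]
    (κ : Cardinal.{u}) : Prop :=
  ∀ (α : Type u), Cardinal.mk α < κ → ∀ a b : α → 𝕄, EqTpOver L (∅ : Set 𝕄) a b →
    ∃ σ : 𝕄 ≃[L] 𝕄, ∀ i, σ (a i) = b i

/-- `𝕄` is a monster model (for smallness degree `κ`): sufficiently saturated
and strongly homogeneous. -/
def IsMonster (L : FirstOrder.Language.{u, u}) (𝕄 : Type u) [L.Structure 𝕄] (κ : Cardinal.{u}) : Prop :=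
  Cardinal.aleph0 < κ ∧ IsSaturated L 𝕄 κ ∧ IsStronglyHomogeneous L 𝕄 κ

/-! ### Tree combinatorics -/

/-- The meet (longest common prefix) of two finite sequences. -/
def meet {A : Type w} [DecidableEq A] : List A → List A → List A
  | a :: as, b :: bs => if a = b then a :: meet as bs else []
  | _, _ => []

/-- The meet of `η 0, …, η i`. -/
def combMeet {A : Type w} [DecidableEq A] {k : ℕ} (η : Fin k → List A) (i : Fin k) : List A :=
  (List.ofFn fun j : Fin i.val => η (Fin.castLE i.2.le j)).foldl meet (η i)

/-- `η 0, …, η (k-1)` is a descending comb: a lexicographically increasing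
antichain such that the meet of `η 0, …, η (i+1)` is a proper initial segment
of the meet of `η 0, …, η i`. -/
def DescendingComb {A : Type w} [DecidableEq A] [LT A] {k : ℕ} (η : Fin k → List A) : Prop :=
  (∀ i j : Fin k, i ≠ j → ¬ η i <+: η j) ∧
  (∀ i j : Fin k, i < j → List.Lex (· < ·) (η i) (η j)) ∧
  (∀ (i : ℕ) (h : i + 1 < k),
    combMeet η ⟨i + 1, h⟩ <+: combMeet η ⟨i, by omega⟩ ∧
    combMeet η ⟨i + 1, h⟩ ≠ combMeet η ⟨i, by omega⟩)

/-! ### Tree properties of theories (witnessed in the monster model) -/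

/-- `T = Th(𝕄)` has `SOP₁`. -/
def HasSOP1 (L : FirstOrder.Language.{u, u}) (𝕄 : Type u) [L.Structure 𝕄] : Prop :=
  ∃ (k m : ℕ) (φ : L.Formula (Fin k ⊕ Fin m)) (b : List Bool → Fin m → 𝕄),
    (∀ σ : ℕ → Bool, ∃ a : Fin k → 𝕄,
      ∀ n : ℕ, φ.Realize (Sum.elim a (b (List.ofFn fun i : Fin n => σ i)))) ∧
    ∀ η₁ η₂ : List Bool, (η₁ ++ [false]) <+: η₂ →
      ¬ ∃ a : Fin k → 𝕄, φ.Realize (Sum.elim a (b η₂)) ∧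
        φ.Realize (Sum.elim a (b (η₁ ++ [true])))

/-- `T = Th(𝕄)` has `SOP₂`. -/
def HasSOP2 (L : FirstOrder.Language.{u, u}) (𝕄 : Type u) [L.Structure 𝕄] : Prop :=
  ∃ (k m : ℕ) (φ : L.Formula (Fin k ⊕ Fin m)) (b : List Bool → Fin m → 𝕄),
    (∀ σ : ℕ → Bool, ∃ a : Fin k → 𝕄,
      ∀ n : ℕ, φ.Realize (Sum.elim a (b (List.ofFn fun i : Fin n => σ i)))) ∧
    ∀ η₁ η₂ : List Bool, ¬ η₁ <+: η₂ → ¬ η₂ <+: η₁ →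
      ¬ ∃ a : Fin k → 𝕄, φ.Realize (Sum.elim a (b η₁)) ∧ φ.Realize (Sum.elim a (b η₂))

/-- `T = Th(𝕄)` has `k`-`DCTP₁`: paths are consistent but descending combs of
size `k` are inconsistent. -/
def HasKDCTP1 (L : FirstOrder.Language.{u, u}) (𝕄 : Type u) [L.Structure 𝕄] (k : ℕ) : Prop :=
  ∃ (r m : ℕ) (φ : L.Formula (Fin r ⊕ Fin m)) (b : List ℕ → Fin m → 𝕄),
    (∀ σ : ℕ → ℕ, ∃ a : Fin r → 𝕄,
      ∀ n : ℕ, φ.Realize (Sum.elim a (b (List.ofFn fun i : Fin n => σ i)))) ∧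
    ∀ η : Fin k → List ℕ, DescendingComb η →
      ¬ ∃ a : Fin r → 𝕄, ∀ i, φ.Realize (Sum.elim a (b (η i)))

/-- `T = Th(𝕄)` has weak `k`-`TP₁`: paths are consistent but any `k` pairwise
incomparable nodes with common pairwise meet are inconsistent. -/
def HasWeakKTP1 (L : FirstOrder.Language.{u, u}) (𝕄 : Type u) [L.Structure 𝕄] (k : ℕ) : Prop :=
  ∃ (r m : ℕ) (φ : L.Formula (Fin r ⊕ Fin m)) (b : List ℕ → Fin m → 𝕄),
    (∀ σ : ℕ → ℕ, ∃ a : Fin r → 𝕄,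
      ∀ n : ℕ, φ.Realize (Sum.elim a (b (List.ofFn fun i : Fin n => σ i)))) ∧
    ∀ η : Fin k → List ℕ,
      (∀ i j, i ≠ j → ¬ η i <+: η j) →
      (∀ i j i' j' : Fin k, i ≠ j → i' ≠ j' → meet (η i) (η j) = meet (η i') (η j')) →
      ¬ ∃ a : Fin r → 𝕄, ∀ i, φ.Realize (Sum.elim a (b (η i)))

/-- `T = Th(𝕄)` has `k`-`DCTP₂`: paths are `k`-inconsistent but descending
combs are consistent. -/
def HasKDCTP2 (L : FirstOrder.Language.{u, u}) (𝕄 : Type u) [L.Structure 𝕄] (k : ℕ) : Prop :=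
  ∃ (r m : ℕ) (φ : L.Formula (Fin r ⊕ Fin m)) (b : List Bool → Fin m → 𝕄),
    (∀ σ : ℕ → Bool, ∀ s : Finset ℕ, s.card = k →
      ¬ ∃ a : Fin r → 𝕄, ∀ n ∈ s,
        φ.Realize (Sum.elim a (b (List.ofFn fun i : Fin n => σ i)))) ∧
    ∀ (l : ℕ) (η : Fin l → List Bool), DescendingComb η →
      ∃ a : Fin r → 𝕄, ∀ i, φ.Realize (Sum.elim a (b (η i)))

/-! ### Kim-dividing and Conant-dividing, with respect to coheir Morley sequences -/

/-- `φ(x, b)` Kim-divides over `Ms`: some coheir Morley sequence over `Ms`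
starting with `b` makes it inconsistent. -/
def KimDivides (L : FirstOrder.Language.{u, u}) {𝕄 : Type u} [L.Structure 𝕄] (Ms : Set 𝕄)
    {α : Type v} {n : ℕ} (φ : L.Formula (α ⊕ Fin n)) (b : Fin n → 𝕄) : Prop :=
  ∃ B : ℕ → Fin n → 𝕄, CoheirMorley L Ms B ∧ B 0 = b ∧
    ¬ ∃ a : α → 𝕄, ∀ i, φ.Realize (Sum.elim a (B i))

/-- `φ(x, b)` Kim-forks over `Ms`: it implies a finite disjunction of formulas
Kim-dividing over `Ms`. -/
def KimForks (L : FirstOrder.Language.{u, u}) {𝕄 : Type u} [L.Structure 𝕄] (Ms : Set 𝕄)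
    {α : Type v} {n : ℕ} (φ : L.Formula (α ⊕ Fin n)) (b : Fin n → 𝕄) : Prop :=
  ∃ (N : ℕ) (m : Fin N → ℕ) (ψ : ∀ j : Fin N, L.Formula (α ⊕ Fin (m j)))
    (c : ∀ j : Fin N, Fin (m j) → 𝕄),
    (∀ j, KimDivides L Ms (ψ j) (c j)) ∧
    ∀ a : α → 𝕄, φ.Realize (Sum.elim a b) → ∃ j, (ψ j).Realize (Sum.elim a (c j))

/-- `φ(x, b)` Conant-divides over `Ms`: every coheir Morley sequence over `Ms`
starting with `b` makes it inconsistent. -/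
def ConantDivides (L : FirstOrder.Language.{u, u}) {𝕄 : Type u} [L.Structure 𝕄] (Ms : Set 𝕄)
    {α : Type v} {n : ℕ} (φ : L.Formula (α ⊕ Fin n)) (b : Fin n → 𝕄) : Prop :=
  ∀ B : ℕ → Fin n → 𝕄, CoheirMorley L Ms B → B 0 = b →
    ¬ ∃ a : α → 𝕄, ∀ i, φ.Realize (Sum.elim a (B i))

/-- `φ(x, b)` Conant-forks over `Ms`. -/
def ConantForks (L : FirstOrder.Language.{u, u}) {𝕄 : Type u} [L.Structure 𝕄] (Ms : Set 𝕄)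
    {α : Type v} {n : ℕ} (φ : L.Formula (α ⊕ Fin n)) (b : Fin n → 𝕄) : Prop :=
  ∃ (N : ℕ) (m : Fin N → ℕ) (ψ : ∀ j : Fin N, L.Formula (α ⊕ Fin (m j)))
    (c : ∀ j : Fin N, Fin (m j) → 𝕄),
    (∀ j, ConantDivides L Ms (ψ j) (c j)) ∧
    ∀ a : α → 𝕄, φ.Realize (Sum.elim a b) → ∃ j, (ψ j).Realize (Sum.elim a (c j))

/-- `a ⫝^{K*}_{Ms} b` : `tp(a/Ms b)` contains no formula Conant-forking
over `Ms`. -/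
def ConantIndep (L : FirstOrder.Language.{u, u}) {𝕄 : Type u} [L.Structure 𝕄] (Ms : Set 𝕄)
    {α : Type v} {β : Type w} (a : α → 𝕄) (b : β → 𝕄) : Prop :=
  ∀ (n : ℕ) (φ : L.Formula (α ⊕ Fin n)) (d : Fin n → 𝕄),
    (∀ i, d i ∈ Ms ∪ Set.range b) → φ.Realize (Sum.elim a d) →
    ¬ ConantForks L Ms φ d

/-! ### Abstract independence relations between sets over models -/

/-- An abstract ternary relation `A ⫝_M B` between subsets of `𝕄` over
(elementary submodels of) `𝕄`. -/
structure IndRel (L : FirstOrder.Language.{u, u}) (𝕄 : Type u) [L.Structure 𝕄] where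
  rel : Set 𝕄 → Set 𝕄 → Set 𝕄 → Prop

/-- A set `S` of `α`-tuples is type-definable over `C`. -/
def TypeDefinableOver (L : FirstOrder.Language.{u, u}) {𝕄 : Type u} [L.Structure 𝕄] (C : Set 𝕄)
    {γ : Type v} (S : Set (γ → 𝕄)) : Prop :=
  ∃ Γ : Set (FmlP L 𝕄 γ), (∀ p ∈ Γ, ∀ i, p.2.2 i ∈ C) ∧
    ∀ g : γ → 𝕄, g ∈ S ↔ ∀ p ∈ Γ, p.2.1.Realize (Sum.elim g p.2.2)

namespace IndRel


/-- Invariance under automorphisms of `𝕄`. -/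
def Invariant (R : IndRel L 𝕄) : Prop :=
  ∀ (σ : 𝕄 ≃[L] 𝕄) (A Ms B : Set 𝕄), R.rel A Ms B →
    R.rel ((⇑σ) '' A) ((⇑σ) '' Ms) ((⇑σ) '' B)

/-- Monotonicity (on both sides). -/
def Mono (R : IndRel L 𝕄) : Prop :=
  ∀ (A A' Ms B B' : Set 𝕄), IsElemSubmodel L Ms → R.rel A Ms B →
    Ms ⊆ A' → A' ⊆ A → Ms ⊆ B' → B' ⊆ B → R.rel A' Ms B'

/-- Existence: for `M ⊆ A, B` there is `A' ≡_M A` with `A' ⫝_M B`. -/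
def Existence (R : IndRel L 𝕄) (κ : Cardinal.{u}) : Prop :=
  ∀ (Ms : Set 𝕄), IsElemSubmodel L Ms → Cardinal.mk Ms < κ →
    ∀ (α β : Type u), Cardinal.mk α < κ → Cardinal.mk β < κ →
      ∀ (a : α → 𝕄) (b : β → 𝕄),
        ∃ a' : α → 𝕄, EqTpOver L Ms a' a ∧
          R.rel (Ms ∪ Set.range a') Ms (Ms ∪ Set.range b)

/-- Right extension. -/
def RightExt (R : IndRel L 𝕄) (κ : Cardinal.{u}) : Prop :=
  ∀ (Ms : Set 𝕄), IsElemSubmodel L Ms → Cardinal.mk Ms < κ →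
    ∀ (α : Type u), Cardinal.mk α < κ → ∀ (a : α → 𝕄) (B C : Set 𝕄),
      Cardinal.mk B < κ → Cardinal.mk C < κ →
      R.rel (Set.range a) Ms B → B ⊆ C →
      ∃ a' : α → 𝕄, EqTpOver L B a' a ∧ R.rel (Set.range a') Ms C

/-- Quasi-strong finite character: for complete types `p = tp(a₀/Ms)` and
`q = tp(b₀/Ms)`, the set of pairs of realizations `(a, b)` with `a ⫝_Ms b`
is type-definable over `Ms`. -/
def QSFC (R : IndRel L 𝕄) (κ : Cardinal.{u}) : Prop :=
  ∀ (Ms : Set 𝕄), IsElemSubmodel L Ms → Cardinal.mk Ms < κ →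
    ∀ (α β : Type u), Cardinal.mk α < κ → Cardinal.mk β < κ →
      ∀ (a₀ : α → 𝕄) (b₀ : β → 𝕄),
        TypeDefinableOver L Ms {g : (α ⊕ β) → 𝕄 |
          EqTpOver L Ms (g ∘ Sum.inl) a₀ ∧ EqTpOver L Ms (g ∘ Sum.inr) b₀ ∧
          R.rel (Set.range (g ∘ Sum.inl)) Ms (Set.range (g ∘ Sum.inr))}

/-- The coheir chain condition. -/
def CoheirChain (R : IndRel L 𝕄) (κ : Cardinal.{u}) : Prop :=
  ∀ (Ms : Set 𝕄), IsElemSubmodel L Ms → Cardinal.mk Ms < κ →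
    ∀ (α β : Type u), Cardinal.mk α < κ → Cardinal.mk β < κ →
      ∀ (a : α → 𝕄) (b : β → 𝕄), R.rel (Set.range a) Ms (Set.range b) →
        ∀ I : ℕ → β → 𝕄, CoheirMorley L Ms I → I 0 = b →
          ∃ I' : ℕ → β → 𝕄, EqTpOver L Ms (flatSeq I') (flatSeq I) ∧
            R.rel (Set.range a) Ms (⋃ i, Set.range (I' i)) ∧
            ∀ i, EqTpOver L (Ms ∪ Set.range a) (I' i) b

/-- `R` implies `⫝ʰ` : `A ⫝_M B` implies `tp(B / M A)` is finitely
satisfiable in `M`. -/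
def StrongerThanH (R : IndRel L 𝕄) : Prop :=
  ∀ (A Ms B : Set 𝕄), IsElemSubmodel L Ms → R.rel A Ms B →
    FinSatIn L Ms (fun x : B => (x : 𝕄)) (Ms ∪ A)

end IndRel

/-- The axioms satisfied by the relations among which `⫝^CK` is weakest. -/
def GoodRel (R : IndRel L 𝕄) (κ : Cardinal.{u}) : Prop :=
  R.StrongerThanH ∧ R.Invariant ∧ R.Mono ∧ R.Existence κ ∧ R.RightExt κ ∧ R.CoheirChain κ

/-- `R` is `⫝^CK` : the weakest relation implying `⫝ʰ` and satisfying
invariance, monotonicity, existence, right extension and the coheir chain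
condition. -/
def IsCK (R : IndRel L 𝕄) (κ : Cardinal.{u}) : Prop :=
  GoodRel R κ ∧ ∀ R' : IndRel L 𝕄, GoodRel R' κ →
    ∀ A Ms B : Set 𝕄, R'.rel A Ms B → R.rel A Ms B

/-- `q` is a canonical global type over `Ms` (w.r.t. the relation `R = ⫝^CK`):
whenever `c ⊨ q|_{Ms b}` we have `b ⫝^CK_{Ms} c`. -/
def IsCanonicalGlobal (R : IndRel L 𝕄) (κ : Cardinal.{u}) (Ms : Set 𝕄) {α : Type v}
    (q : GlobalType L 𝕄 α) : Prop :=
  ∀ (β : Type u), Cardinal.mk β < κ → ∀ (b : β → 𝕄) (c : α → 𝕄),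
    RealizesType q c (Ms ∪ Set.range b) → R.rel (Set.range b) Ms (Set.range c)

/-- A canonical Morley sequence over `Ms`: a coheir Morley sequence in a
canonical coheir. -/
def CanonicalMorley (R : IndRel L 𝕄) (κ : Cardinal.{u}) (Ms : Set 𝕄) {α : Type v}
    (I : ℕ → α → 𝕄) : Prop :=
  ∃ q : GlobalType L 𝕄 α, IsCanonicalGlobal R κ Ms q ∧ MorleyIn q Ms I

/-- `q` is a strong canonical global type over `Ms`. -/
def IsStrongCanonical (R : IndRel L 𝕄) (κ : Cardinal.{u}) (Ms : Set 𝕄) {α : Type v}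
    (q : GlobalType L 𝕄 α) : Prop :=
  ∀ (β : Type u), Cardinal.mk β < κ → ∀ (b : β → 𝕄) (c : α → 𝕄),
    RealizesType q c (Ms ∪ Set.range b) →
    ∀ (γ : Type u), Cardinal.mk γ < κ → ∀ (a : γ → 𝕄),
      ∃ a' : γ → 𝕄, EqTpOver L (Ms ∪ Set.range c) a' a ∧
        ∃ q' : GlobalType L 𝕄 (γ ⊕ α), IsCanonicalGlobal R κ Ms q' ∧
          ExtendsTpOver q' (Ms ∪ Set.range b) (Sum.elim a' c)

/-! ### `M`-invariant ideals and `𝓘`-Kim-dividing -/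

/-- An `Ms`-invariant ideal on the definable subsets of `𝕄` (in variables `α`). -/
structure InvIdeal (L : FirstOrder.Language.{u, u}) (𝕄 : Type u) [L.Structure 𝕄] (Ms : Set 𝕄)
    (α : Type v) where
  mem : Set (α → 𝕄) → Prop
  definable_of_mem : ∀ S, mem S → ∃ (n : ℕ) (ψ : L.Formula (α ⊕ Fin n)) (c : Fin n → 𝕄),
    S = {a : α → 𝕄 | ψ.Realize (Sum.elim a c)}
  union_mem : ∀ S T, mem S → mem T → mem (S ∪ T)
  subset_mem : ∀ S T, mem S →
    (∃ (n : ℕ) (ψ : L.Formula (α ⊕ Fin n)) (c : Fin n → 𝕄),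
      T = {a : α → 𝕄 | ψ.Realize (Sum.elim a c)}) →
    T ⊆ S → mem T
  invariant : ∀ σ : 𝕄 ≃[L] 𝕄, (∀ x ∈ Ms, σ x = x) → ∀ S, mem S →
    mem ((fun a => (⇑σ) ∘ a) '' S)

/-- `φ(x, b)` `𝓘`-Kim-divides over `Ms`. -/
def IKimDivides {Ms : Set 𝕄} {α : Type v} (I : InvIdeal L 𝕄 Ms α) {n : ℕ}
    (φ : L.Formula (α ⊕ Fin n)) (b : Fin n → 𝕄) : Prop :=
  ∃ (B : ℕ → Fin n → 𝕄) (k : ℕ), CoheirMorley L Ms B ∧ B 0 = b ∧ 0 < k ∧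
    ∀ s : Finset ℕ, s.card = k →
      I.mem {a : α → 𝕄 | ∀ i ∈ s, φ.Realize (Sum.elim a (B i))}

/-- `φ(x, b)` `𝓘`-Kim-forks over `Ms`. -/
def IKimForks {Ms : Set 𝕄} {α : Type v} (I : InvIdeal L 𝕄 Ms α) {n : ℕ}
    (φ : L.Formula (α ⊕ Fin n)) (b : Fin n → 𝕄) : Prop :=
  ∃ (N : ℕ) (m : Fin N → ℕ) (ψ : ∀ j : Fin N, L.Formula (α ⊕ Fin (m j)))
    (c : ∀ j : Fin N, Fin (m j) → 𝕄),
    (∀ j, IKimDivides I (ψ j) (c j)) ∧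
    ∀ a : α → 𝕄, φ.Realize (Sum.elim a b) → ∃ j, (ψ j).Realize (Sum.elim a (c j))

/-- `φ(x, b)` `𝓘`-quasi-divides over `Ms`. -/
def IQuasiDivides {Ms : Set 𝕄} {α : Type v} (I : InvIdeal L 𝕄 Ms α) {n : ℕ}
    (φ : L.Formula (α ⊕ Fin n)) (b : Fin n → 𝕄) : Prop :=
  ∃ (mm : ℕ) (b' : Fin mm → Fin n → 𝕄), 0 < mm ∧ (∀ j, EqTpOver L Ms (b' j) b) ∧
    I.mem {a : α → 𝕄 | ∀ j, φ.Realize (Sum.elim a (b' j))}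

/-! ### `h^⫝`-inconsistency and the derived relation `⫝'` -/

/-- A family of formulas is `h^⫝`-inconsistent with respect to `P = tp(a₀/Ms)`. -/
def HInconsistent (R : IndRel L 𝕄) (Ms : Set 𝕄) {α : Type v} (a₀ : α → 𝕄)
    {ι : Type w} (m : ι → ℕ) (φ : ∀ i : ι, L.Formula (α ⊕ Fin (m i)))
    (b : ∀ i : ι, Fin (m i) → 𝕄) : Prop :=
  ¬ ∃ a : α → 𝕄, EqTpOver L Ms a a₀ ∧
      R.rel (Set.range a) Ms (⋃ i, Set.range (b i)) ∧
      ∀ i, (φ i).Realize (Sum.elim a (b i))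

/-- A single formula is `h^⫝`-inconsistent with respect to `P = tp(a₀/Ms)`. -/
def HInconsistentSingle (R : IndRel L 𝕄) (Ms : Set 𝕄) {α : Type v} (a₀ : α → 𝕄)
    {n : ℕ} (φ : L.Formula (α ⊕ Fin n)) (b : Fin n → 𝕄) : Prop :=
  ¬ ∃ a : α → 𝕄, EqTpOver L Ms a a₀ ∧ R.rel (Set.range a) Ms (Set.range b) ∧
      φ.Realize (Sum.elim a b)

/-- `φ(x, b)` `h^⫝`-Kim-divides with respect to `tp(a₀/Ms)`. -/
def HKimDivides (R : IndRel L 𝕄) (Ms : Set 𝕄) {α : Type v} (a₀ : α → 𝕄)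
    {n : ℕ} (φ : L.Formula (α ⊕ Fin n)) (b : Fin n → 𝕄) : Prop :=
  ∃ B : ℕ → Fin n → 𝕄, CoheirMorley L Ms B ∧ B 0 = b ∧
    HInconsistent R Ms a₀ (fun _ : ℕ => n) (fun _ => φ) B

/-- `φ(x, b)` `h^⫝`-Kim-forks with respect to `tp(a₀/Ms)`. -/
def HKimForks (R : IndRel L 𝕄) (Ms : Set 𝕄) {α : Type v} (a₀ : α → 𝕄)
    {n : ℕ} (φ : L.Formula (α ⊕ Fin n)) (b : Fin n → 𝕄) : Prop :=
  ∃ (N : ℕ) (m : Fin N → ℕ) (ψ : ∀ j : Fin N, L.Formula (α ⊕ Fin (m j)))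
    (c : ∀ j : Fin N, Fin (m j) → 𝕄),
    (∀ j, HKimDivides R Ms a₀ (ψ j) (c j)) ∧
    ∀ a : α → 𝕄, φ.Realize (Sum.elim a b) → ∃ j, (ψ j).Realize (Sum.elim a (c j))

/-- `φ(x, b)` `h^⫝`-quasi-divides with respect to `tp(a₀/Ms)`. -/
def HQuasiDivides (R : IndRel L 𝕄) (Ms : Set 𝕄) {α : Type v} (a₀ : α → 𝕄)
    {n : ℕ} (φ : L.Formula (α ⊕ Fin n)) (b : Fin n → 𝕄) : Prop :=
  ∃ (mm : ℕ) (b' : Fin mm → Fin n → 𝕄), 0 < mm ∧ (∀ j, EqTpOver L Ms (b' j) b) ∧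
    HInconsistent R Ms a₀ (fun _ : Fin mm => n) (fun _ => φ) b'

/-- The derived relation `⫝'` on tuples:
`tp(a / Ms b)` contains no formula `h^⫝`-Kim-forking w.r.t. `tp(a/Ms)`. -/
def DerivedIndep (R : IndRel L 𝕄) (Ms : Set 𝕄) {α : Type v} {β : Type w}
    (a : α → 𝕄) (b : β → 𝕄) : Prop :=
  ∀ (n : ℕ) (φ : L.Formula (α ⊕ Fin n)) (d : Fin n → 𝕄),
    (∀ i, d i ∈ Ms ∪ Set.range b) → φ.Realize (Sum.elim a d) →
    ¬ HKimForks R Ms a φ d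

/-- The derived relation `⫝'` as a relation between sets over models. -/
def derived (R : IndRel L 𝕄) : IndRel L 𝕄 where
  rel A Ms B := ∀ (n : ℕ) (φ : L.Formula (↥A ⊕ Fin n)) (d : Fin n → 𝕄),
    (∀ i, d i ∈ Ms ∪ B) → φ.Realize (Sum.elim (fun x : A => (x : 𝕄)) d) →
    ¬ HKimForks R Ms (fun x : A => (x : 𝕄)) φ d

/-! ### Coheir trees -/

/-- The tuple, indexed by extensions, consisting of the part of the tree `c`
lying (weakly) above the node `ν` (where `ν` has length `Lh`). -/
def subtreeTupleLen {α : Type v} {n : ℕ} (c : {l : List ℕ // l.length ≤ n} → α → 𝕄)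
    (Lh : ℕ) (ν : List ℕ) (hν : ν.length = Lh) :
    ({s : List ℕ // Lh + s.length ≤ n} × α) → 𝕄 :=
  fun p => c ⟨ν ++ p.1.1, by rw [List.length_append, hν]; exact p.1.2⟩ p.2

end NSOP2Paper

namespace NSOP2Paper

-- AUX START

section Aux

variable {L : FirstOrder.Language.{u, u}} {𝕄 : Type u} [L.Structure 𝕄]

/-- The complete type of a tuple over a parameter set, as a set of `FmlP`s. -/
def tpSet (C : Set 𝕄) {α : Type v} (g : α → 𝕄) : Set (FmlP L 𝕄 α) :=
  {p | (∀ i, p.2.2 i ∈ C) ∧ p.2.1.Realize (Sum.elim g p.2.2)}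

/-- Conjunction indexed by a finset (compatibility form). -/
noncomputable def fsInf {L' : FirstOrder.Language} {α' β' : Type*} {n : ℕ} (s' : Finset β')
    (f : β' → L'.BoundedFormula α' n) : L'.BoundedFormula α' n :=
  BoundedFormula.iInf (fun b : s' => f b)

theorem realize_fsInf {L' : FirstOrder.Language} {M' : Type*} [L'.Structure M'] {α' β' : Type*}
    {n : ℕ} (s' : Finset β') (f : β' → L'.BoundedFormula α' n) (v : α' → M') (v' : Fin n → M') :
    (fsInf s' f).Realize v v' ↔ ∀ b ∈ s', (f b).Realize v v' := by
  unfold fsInf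
  rw [BoundedFormula.realize_iInf]
  exact ⟨fun h b hb => h ⟨b, hb⟩, fun h b => h b.1 b.2⟩

/-- Disjunction indexed by a finset (compatibility form). -/
noncomputable def fsSup {L' : FirstOrder.Language} {α' β' : Type*} {n : ℕ} (s' : Finset β')
    (f : β' → L'.BoundedFormula α' n) : L'.BoundedFormula α' n :=
  BoundedFormula.iSup (fun b : s' => f b)

theorem realize_fsSup {L' : FirstOrder.Language} {M' : Type*} [L'.Structure M'] {α' β' : Type*}
    {n : ℕ} (s' : Finset β') (f : β' → L'.BoundedFormula α' n) (v : α' → M') (v' : Fin n → M') :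
    (fsSup s' f).Realize v v' ↔ ∃ b ∈ s', (f b).Realize v v' := by
  unfold fsSup
  rw [BoundedFormula.realize_iSup]
  exact ⟨fun ⟨b, h⟩ => ⟨b.1, b.2, h⟩, fun ⟨b, hb, h⟩ => ⟨⟨b, hb⟩, h⟩⟩

/-- Existential quantification along a relabelling (compatibility form). -/
noncomputable def fIExs {L' : FirstOrder.Language} {α' β' γ' : Type*} [Finite γ']
    (φ : L'.Formula α') (f : α' → β' ⊕ γ') : L'.Formula β' :=
  (φ.relabel f).iExs γ'

theorem realize_fIExs {L' : FirstOrder.Language} {M' : Type*} [L'.Structure M']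
    {α' β' γ' : Type*} [Finite γ'] {φ : L'.Formula α'} {f : α' → β' ⊕ γ'} {v : β' → M'} :
    (fIExs φ f).Realize v ↔ ∃ i : γ' → M', φ.Realize (fun a => Sum.elim v i (f a)) := by
  unfold fIExs
  rw [Formula.realize_iExs]
  exact exists_congr fun i => by rw [Formula.realize_relabel]; rfl

/-- Universal quantification along a relabelling (compatibility form). -/
noncomputable def fIAlls {L' : FirstOrder.Language} {α' β' γ' : Type*} [Finite γ']
    (φ : L'.Formula α') (f : α' → β' ⊕ γ') : L'.Formula β' :=
  (φ.relabel f).iAlls γ'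

theorem realize_fIAlls {L' : FirstOrder.Language} {M' : Type*} [L'.Structure M']
    {α' β' γ' : Type*} [Finite γ'] {φ : L'.Formula α'} {f : α' → β' ⊕ γ'} {v : β' → M'} :
    (fIAlls φ f).Realize v ↔ ∀ i : γ' → M', φ.Realize (fun a => Sum.elim v i (f a)) := by
  unfold fIAlls
  rw [Formula.realize_iAlls]
  exact forall_congr' fun i => by rw [Formula.realize_relabel]; rfl

/-- Conjunction of a finite set of formulas-with-parameters as a single
formula-with-parameters. -/
theorem finsetConj {α : Type v} (t : Finset (FmlP L 𝕄 α)) :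
    ∃ (n : ℕ) (Φ : L.Formula (α ⊕ Fin n)) (c : Fin n → 𝕄),
      (∀ j, ∃ p ∈ t, ∃ i, c j = p.2.2 i) ∧
      ∀ a : α → 𝕄, (Φ.Realize (Sum.elim a c) ↔
        ∀ p ∈ t, p.2.1.Realize (Sum.elim a p.2.2)) := by
  classical
  let γ := Σ p : {p : FmlP L 𝕄 α // p ∈ t}, Fin p.1.1
  let e : γ ≃ Fin (Fintype.card γ) := Fintype.equivFin γ
  let cc : γ → 𝕄 := fun s => s.1.1.2.2 s.2
  let f : {p : FmlP L 𝕄 α // p ∈ t} → L.Formula (α ⊕ γ) := fun p =>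
    p.1.2.1.relabel (Sum.map id (fun i => (⟨p, i⟩ : γ)))
  let Φ₀ : L.Formula (α ⊕ γ) := fsInf t.attach f
  refine ⟨Fintype.card γ, Φ₀.relabel (Sum.map id e), cc ∘ e.symm, ?_, ?_⟩
  · rintro j
    exact ⟨(e.symm j).1.1, (e.symm j).1.2, (e.symm j).2, rfl⟩
  · intro a
    rw [Formula.realize_relabel]
    have h1 : Sum.elim a (cc ∘ e.symm) ∘ Sum.map id e = Sum.elim a cc := by
      funext z; cases z with
      | inl z => rfl
      | inr z => simp
    rw [h1]
    have h2 : (Φ₀.Realize (Sum.elim a cc)) ↔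
        ∀ p ∈ t.attach, (f p).Realize (Sum.elim a cc) := by
      exact realize_fsInf t.attach f (Sum.elim a cc) default
    rw [h2]
    constructor
    · intro h p hp
      have := h ⟨p, hp⟩ (Finset.mem_attach _ _)
      rw [Formula.realize_relabel] at this
      convert this using 1
      congr 1
      funext z; cases z <;> rfl
    · intro h p _
      rw [Formula.realize_relabel]
      have := h p.1 p.2
      convert this using 1
      congr 1
      funext z; cases z <;> rfl

/-- If `g` realizes `q` over `C` then a formula over `C` is realized by `g`
iff it belongs to `q`. -/
theorem realize_iff_mem {α : Type v} {q : GlobalType L 𝕄 α} {g : α → 𝕄} {C : Set 𝕄}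
    (hg : RealizesType q g C) {n : ℕ} (φ : L.Formula (α ⊕ Fin n)) (e : Fin n → 𝕄)
    (he : ∀ i, e i ∈ C) :
    φ.Realize (Sum.elim g e) ↔ (⟨n, (φ, e)⟩ : FmlP L 𝕄 α) ∈ q.carrier := by
  constructor
  · intro h
    rcases q.complete n φ e with hm | hm
    · exact hm
    · exact absurd (hg n φ.not e he hm) (by rw [Formula.realize_not]; exact fun h' => h' h)
  · intro h
    exact hg n φ e he h

theorem RealizesType.mono {α : Type v} {q : GlobalType L 𝕄 α} {g : α → 𝕄} {C C' : Set 𝕄}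
    (hg : RealizesType q g C') (h : C ⊆ C') : RealizesType q g C :=
  fun n φ e he hm => hg n φ e (fun i => h (he i)) hm

/-- Invariance of a finitely satisfiable global type under parameter tuples
with the same type over `Ms`, for finite variable types. -/
theorem GlobalType.invariant_param {Ms : Set 𝕄} {α : Type v} [Fintype α]
    (q : GlobalType L 𝕄 α) (hq : q.FinSatInM Ms) {n : ℕ} {φ : L.Formula (α ⊕ Fin n)}
    {c c' : Fin n → 𝕄} (hcc' : EqTpOver L Ms c c')
    (h : (⟨n, (φ, c)⟩ : FmlP L 𝕄 α) ∈ q.carrier) :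
    (⟨n, (φ, c')⟩ : FmlP L 𝕄 α) ∈ q.carrier := by
  classical
  by_contra hn
  rcases q.complete n φ c' with hm | hm
  · exact hn hm
  -- finitely satisfiable: get a tuple in Ms realizing φ(·,c) ∧ ¬φ(·,c')
  have hsub : ↑({⟨n, (φ, c)⟩, ⟨n, (φ.not, c')⟩} : Finset (FmlP L 𝕄 α)) ⊆ q.carrier := by
    intro p hp
    simp only [Finset.coe_insert, Finset.coe_singleton, Set.mem_insert_iff,
      Set.mem_singleton_iff] at hp
    rcases hp with rfl | rfl
    · exact h
    · exact hm
  obtain ⟨m, hmMs, hmr⟩ := hq _ hsub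
  have h1 : φ.Realize (Sum.elim m c) := by
    have := hmr ⟨n, (φ, c)⟩ (by simp)
    exact this
  have h2 : ¬ φ.Realize (Sum.elim m c') := by
    have := hmr ⟨n, (φ.not, c')⟩ (by simp)
    rw [Formula.realize_not] at this
    exact this
  -- move the `m`-variables into parameters
  let eα : α ≃ Fin (Fintype.card α) := Fintype.equivFin α
  let g : α ⊕ Fin n → Fin n ⊕ Fin (Fintype.card α) :=
    Sum.elim (fun a => Sum.inr (eα a)) Sum.inl
  have key : ∀ d : Fin n → 𝕄,
      (φ.relabel g).Realize (Sum.elim d (m ∘ eα.symm)) ↔ φ.Realize (Sum.elim m d) := by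
    intro d
    rw [Formula.realize_relabel]
    constructor <;> intro hh <;> (convert hh using 1; congr 1; funext z; cases z <;> simp [g])
  have := hcc' (Fintype.card α) (φ.relabel g) (m ∘ eα.symm)
    (fun i => hmMs (eα.symm i))
  rw [key c, key c'] at this
  exact h2 (this.1 h1)

/-- Every finite-variable set of formulas finitely satisfiable in `Ms` extends
to a complete global type finitely satisfiable in `Ms`. -/
theorem exists_global_finSatInM {Ms : Set 𝕄} {α : Type v} (Γ : Set (FmlP L 𝕄 α))
    (hΓ : ∀ t : Finset (FmlP L 𝕄 α), ↑t ⊆ Γ →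
      ∃ m : α → 𝕄, (∀ i, m i ∈ Ms) ∧ ∀ p ∈ t, p.2.1.Realize (Sum.elim m p.2.2)) :
    ∃ q : GlobalType L 𝕄 α, Γ ⊆ q.carrier ∧ q.FinSatInM Ms := by
  classical
  let FS : Set (FmlP L 𝕄 α) → Prop := fun Δ =>
    ∀ t : Finset (FmlP L 𝕄 α), ↑t ⊆ Δ →
      ∃ m : α → 𝕄, (∀ i, m i ∈ Ms) ∧ ∀ p ∈ t, p.2.1.Realize (Sum.elim m p.2.2)
  have hchain : ∀ c ⊆ {Δ | Γ ⊆ Δ ∧ FS Δ}, IsChain (· ⊆ ·) c → c.Nonempty →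
      ∃ ub ∈ {Δ | Γ ⊆ Δ ∧ FS Δ}, ∀ s ∈ c, s ⊆ ub := by
    intro c hc hchain ⟨Δ₀, hΔ₀⟩
    refine ⟨⋃₀ c, ⟨(hc hΔ₀).1.trans (Set.subset_sUnion_of_mem hΔ₀), ?_⟩,
      fun s hs => Set.subset_sUnion_of_mem hs⟩
    intro t ht
    -- a finite subset of the union of a chain lies in one member
    have : ∃ Δ ∈ c, ↑t ⊆ Δ := by
      induction t using Finset.induction with
      | empty => exact ⟨Δ₀, hΔ₀, by simp⟩
      | @insert p t hp ih =>
        have ht' : ↑t ⊆ ⋃₀ c := by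
          refine subset_trans ?_ ht; simp [Finset.coe_insert]
        obtain ⟨Δ, hΔc, hΔ⟩ := ih ht'
        have hpc : p ∈ ⋃₀ c := ht (by simp)
        obtain ⟨Δ', hΔ'c, hpΔ'⟩ := hpc
        rcases eq_or_ne Δ Δ' with rfl | hne
        · exact ⟨Δ, hΔc, by simp [Finset.coe_insert, Set.insert_subset_iff, hpΔ', hΔ]⟩
        · rcases hchain hΔc hΔ'c hne with h | h
          · exact ⟨Δ', hΔ'c, by
              simp [Finset.coe_insert, Set.insert_subset_iff, hpΔ', hΔ.trans h]⟩
          · exact ⟨Δ, hΔc, by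
              simp [Finset.coe_insert, Set.insert_subset_iff, h hpΔ', hΔ]⟩
    obtain ⟨Δ, hΔc, hΔ⟩ := this
    exact (hc hΔc).2 t hΔ
  obtain ⟨Δm, hΓΔ, hmax⟩ := zorn_subset_nonempty {Δ | Γ ⊆ Δ ∧ FS Δ} hchain Γ ⟨subset_rfl, hΓ⟩
  have hFS : FS Δm := hmax.1.2
  -- completeness by maximality
  have hcomplete : ∀ (n : ℕ) (φ : L.Formula (α ⊕ Fin n)) (c : Fin n → 𝕄),
      (⟨n, (φ, c)⟩ : FmlP L 𝕄 α) ∈ Δm ∨ (⟨n, (φ.not, c)⟩ : FmlP L 𝕄 α) ∈ Δm := by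
    intro n φ c
    by_contra hcon
    push_neg at hcon
    obtain ⟨h1, h2⟩ := hcon
    have key : ∀ p : FmlP L 𝕄 α, p ∉ Δm → ¬ FS (insert p Δm) := by
      intro p hp hFS'
      have : insert p Δm = Δm := by
        have := hmax.2 (y := insert p Δm) ⟨hΓΔ.trans (Set.subset_insert _ _), hFS'⟩
          (Set.subset_insert _ _)
        exact le_antisymm this (Set.subset_insert _ _)
      exact hp (this ▸ Set.mem_insert _ _)
    have k1 := key _ h1
    have k2 := key _ h2
    simp only [FS, not_forall] at k1 k2
    obtain ⟨t₁, ht₁, hins₁⟩ := k1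
    obtain ⟨t₂, ht₂, hins₂⟩ := k2
    push_neg at hins₁ hins₂
    have hsub : ↑(t₁.erase ⟨n, (φ, c)⟩ ∪ t₂.erase ⟨n, (φ.not, c)⟩) ⊆ Δm := by
      intro p hp
      simp only [Finset.coe_union, Set.mem_union, Finset.coe_erase, Set.mem_diff] at hp
      rcases hp with ⟨hp, hne⟩ | ⟨hp, hne⟩
      · rcases ht₁ hp with h | h
        · exact absurd h hne
        · exact h
      · rcases ht₂ hp with h | h
        · exact absurd h hne
        · exact h
    obtain ⟨m, hmMs, hmr⟩ := hFS _ hsub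
    by_cases hφ : φ.Realize (Sum.elim m c)
    · obtain ⟨p, hp, hnp⟩ := hins₁ m hmMs
      refine hnp ?_
      rcases eq_or_ne p ⟨n, (φ, c)⟩ with rfl | hne
      · exact hφ
      · exact hmr p (Finset.mem_union_left _ (Finset.mem_erase.2 ⟨hne, hp⟩))
    · obtain ⟨p, hp, hnp⟩ := hins₂ m hmMs
      refine hnp ?_
      rcases eq_or_ne p ⟨n, (φ.not, c)⟩ with rfl | hne
      · exact Formula.realize_not.2 hφ
      · exact hmr p (Finset.mem_union_right _ (Finset.mem_erase.2 ⟨hne, hp⟩))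
  refine ⟨⟨Δm, ?_, hcomplete⟩, hΓΔ, hFS⟩
  intro t ht
  obtain ⟨m, _, hmr⟩ := hFS t ht
  exact ⟨m, hmr⟩

theorem realize_relabel_map_left {γ : Type v} {δ : Type w} {k : ℕ}
    (θ : L.Formula (γ ⊕ Fin k)) (h : γ → δ) (a : δ → 𝕄) (d : Fin k → 𝕄) :
    (θ.relabel (Sum.map h id)).Realize (Sum.elim a d) ↔ θ.Realize (Sum.elim (a ∘ h) d) := by
  rw [Formula.realize_relabel]
  constructor <;> intro hh <;> (convert hh using 2; funext z; cases z <;> rfl)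

/-- Saturation for finite variable types (in arbitrary universes). -/
theorem realize_set_of_finsat_fin {κ : Cardinal.{u}} (hsat : IsSaturated L 𝕄 κ)
    (hκ : Cardinal.aleph0 < κ) {γ : Type v} [Fintype γ] (Γ : Set (FmlP L 𝕄 γ))
    (A : Set 𝕄) (hA : Cardinal.mk A < κ) (hparams : ∀ p ∈ Γ, ∀ i, p.2.2 i ∈ A)
    (hfin : ∀ t : Finset (FmlP L 𝕄 γ), ↑t ⊆ Γ →
      ∃ a : γ → 𝕄, ∀ p ∈ t, p.2.1.Realize (Sum.elim a p.2.2)) :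
    ∃ a : γ → 𝕄, ∀ p ∈ Γ, p.2.1.Realize (Sum.elim a p.2.2) := by
  classical
  let γ' : Type u := ULift.{u, 0} (Fin (Fintype.card γ))
  let e : γ ≃ γ' := (Fintype.equivFin γ).trans Equiv.ulift.symm
  let F : FmlP L 𝕄 γ → FmlP L 𝕄 γ' := fun p => ⟨p.1, (p.2.1.relabel (Sum.map e id), p.2.2)⟩
  have hγ' : Cardinal.mk γ' < κ := by
    have : Cardinal.mk γ' < Cardinal.aleph0 := by
      rw [Cardinal.mk_fintype]; exact Cardinal.nat_lt_aleph0 _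
    exact this.trans hκ
  obtain ⟨a', ha'⟩ := hsat γ' A hγ' hA (F '' Γ)
    (by rintro p ⟨p₀, hp₀, rfl⟩ i; exact hparams p₀ hp₀ i)
    (by
      intro t' ht'
      have hch : ∀ p' : {p' // p' ∈ t'}, ∃ p, p ∈ Γ ∧ F p = p'.1 := fun p' => ht' p'.2
      let t₀ : Finset (FmlP L 𝕄 γ) := t'.attach.image fun p' => Classical.choose (hch p')
      obtain ⟨a, ha⟩ := hfin t₀ (by
        rintro p hp
        rw [Finset.mem_coe, Finset.mem_image] at hp
        obtain ⟨p', -, hpe⟩ := hp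
        exact hpe ▸ (Classical.choose_spec (hch p')).1)
      refine ⟨a ∘ e.symm, ?_⟩
      intro p' hp'
      have hspec := Classical.choose_spec (hch ⟨p', hp'⟩)
      have heq : F (Classical.choose (hch ⟨p', hp'⟩)) = p' := hspec.2
      have hreal : (Classical.choose (hch ⟨p', hp'⟩)).2.1.Realize
          (Sum.elim a (Classical.choose (hch ⟨p', hp'⟩)).2.2) :=
        ha _ (Finset.mem_image.2 ⟨⟨p', hp'⟩, Finset.mem_attach _ _, rfl⟩)
      rw [← heq]
      show ((Classical.choose (hch ⟨p', hp'⟩)).2.1.relabel (Sum.map e id)).Realize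
        (Sum.elim (a ∘ e.symm) (Classical.choose (hch ⟨p', hp'⟩)).2.2)
      rw [realize_relabel_map_left]
      convert hreal using 2
      funext x; simp)
  refine ⟨a' ∘ e, ?_⟩
  intro p hp
  have := ha' (F p) ⟨p, hp, rfl⟩
  rw [show (F p).2.1 = p.2.1.relabel (Sum.map e id) from rfl] at this
  rw [realize_relabel_map_left] at this
  exact this

theorem EqTpOver.symm {C : Set 𝕄} {γ : Type v} {a b : γ → 𝕄} (h : EqTpOver L C a b) :
    EqTpOver L C b a := fun n φ c hc => (h n φ c hc).symm

/-- Appending fixed parameters from `Ms` and reindexing preserves having the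
same type over `Ms`. -/
theorem EqTpOver.comp_elim {Ms : Set 𝕄} {γ : Type v} {a a' : γ → 𝕄}
    (h : EqTpOver L Ms a a') {k : ℕ} (c : Fin k → 𝕄) (hc : ∀ i, c i ∈ Ms)
    {δ : Type w} (h0 : δ → γ ⊕ Fin k) :
    EqTpOver L Ms (Sum.elim a c ∘ h0) (Sum.elim a' c ∘ h0) := by
  intro k' ψ e he
  let g : δ ⊕ Fin k' → γ ⊕ Fin (k + k') := fun z =>
    Sum.map id finSumFinEquiv (Sum.elim (Sum.map id Sum.inl ∘ h0) (Sum.inr ∘ Sum.inr) z)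
  have hfun : ∀ b : γ → 𝕄, Sum.elim b (Sum.elim c e ∘ finSumFinEquiv.symm) ∘ g
      = Sum.elim (Sum.elim b c ∘ h0) e := by
    intro b; funext z
    cases z with
    | inl d =>
      simp only [Function.comp_apply, g]
      cases hd : h0 d with
      | inl w => simp [hd]
      | inr l => simp [hd]
    | inr j => simp [g]
  have key : ∀ b : γ → 𝕄,
      (ψ.relabel g).Realize (Sum.elim b (Sum.elim c e ∘ finSumFinEquiv.symm)) ↔
      ψ.Realize (Sum.elim (Sum.elim b c ∘ h0) e) := by
    intro b
    rw [Formula.realize_relabel, hfun b]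
  rw [← key a, ← key a']
  exact h (k + k') (ψ.relabel g) (Sum.elim c e ∘ finSumFinEquiv.symm)
    (fun i => by
      rcases h' : finSumFinEquiv.symm i with j | j
      · simp only [Function.comp_apply, h', Sum.elim_inl]; exact hc j
      · simp only [Function.comp_apply, h', Sum.elim_inr]; exact he j)

/-- Right extension for Conant-independence. -/
theorem conantIndep_right_ext {κ : Cardinal.{u}} (hmonster : IsMonster L 𝕄 κ)
    (Ms : Set 𝕄) {α β γ : Type u} (hα : Cardinal.mk α < κ) (hβ : Cardinal.mk β < κ)
    (hγ : Cardinal.mk γ < κ) (hMssmall : Cardinal.mk Ms < κ)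
    (a : α → 𝕄) (b : β → 𝕄) (c : γ → 𝕄) (hind : ConantIndep L Ms a b) :
    ∃ a' : α → 𝕄, EqTpOver L (Ms ∪ Set.range b) a' a ∧
      ConantIndep L Ms a' (Sum.elim b c) := by
  classical
  obtain ⟨hκ, hsat, -⟩ := hmonster
  set A : Set 𝕄 := (Ms ∪ Set.range b) ∪ Set.range c with hA
  have hAκ : Cardinal.mk A < κ := by
    refine lt_of_le_of_lt ((Cardinal.mk_union_le _ _).trans
      (add_le_add ((Cardinal.mk_union_le _ _).trans
        (add_le_add le_rfl Cardinal.mk_range_le)) Cardinal.mk_range_le)) ?_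
    exact Cardinal.add_lt_of_lt hκ.le (Cardinal.add_lt_of_lt hκ.le hMssmall hβ) hγ
  set Γ1 : Set (FmlP L 𝕄 α) :=
    {p | (∀ i, p.2.2 i ∈ Ms ∪ Set.range b) ∧ p.2.1.Realize (Sum.elim a p.2.2)} with hΓ1
  set Γ2 : Set (FmlP L 𝕄 α) :=
    {p | ∃ ψ : L.Formula (α ⊕ Fin p.1), p.2.1 = ψ.not ∧ (∀ i, p.2.2 i ∈ A) ∧
      ConantForks L Ms ψ p.2.2} with hΓ2
  have hparams : ∀ p ∈ Γ1 ∪ Γ2, ∀ i, p.2.2 i ∈ A := by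
    rintro p (hp | ⟨ψ, -, hps, -⟩) i
    · exact Set.mem_union_left _ (hp.1 i)
    · exact hps i
  have hfin : ∀ t : Finset (FmlP L 𝕄 α), ↑t ⊆ Γ1 ∪ Γ2 →
      ∃ x : α → 𝕄, ∀ p ∈ t, p.2.1.Realize (Sum.elim x p.2.2) := by
    intro t ht
    by_contra hnot
    push_neg at hnot
    set t₁ := t.filter (· ∈ Γ1) with ht₁
    set t₂ := t.filter (· ∉ Γ1) with ht₂
    obtain ⟨nΦ, Φ, cΦ, hcΦ, hΦspec⟩ := finsetConj t₁
    have hcΦmem : ∀ j, cΦ j ∈ Ms ∪ Set.range b := by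
      intro j
      obtain ⟨p, hp, i, hpe⟩ := hcΦ j
      rw [hpe]
      exact ((Finset.mem_filter.1 hp).2 : p ∈ Γ1).1 i
    have haΦ : Φ.Realize (Sum.elim a cΦ) :=
      (hΦspec a).2 fun p hp => ((Finset.mem_filter.1 hp).2 : p ∈ Γ1).2
    -- each element of t₂ is the negation of a Conant-forking formula
    have hdata : ∀ p : {p : FmlP L 𝕄 α // p ∈ t₂}, ∃ ψ : L.Formula (α ⊕ Fin p.1.1),
        p.1.2.1 = ψ.not ∧ ConantForks L Ms ψ p.1.2.2 := by
      rintro ⟨p, hp⟩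
      have h1 := Finset.mem_filter.1 hp
      rcases ht h1.1 with h | h
      · exact absurd h h1.2
      · exact ⟨Classical.choose h, (Classical.choose_spec h).1, (Classical.choose_spec h).2.2⟩
    choose ψf hψeq hψforks using hdata
    -- unpack the forking data
    choose Np mp θp ep hdiv himp using hψforks
    -- combine into a single family witnessing that Φ Conant-forks
    let T := Σ p : {p : FmlP L 𝕄 α // p ∈ t₂}, Fin (Np p)
    let eT : T ≃ Fin (Fintype.card T) := Fintype.equivFin T
    have hforksΦ : ConantForks L Ms Φ cΦ := by
      refine ⟨Fintype.card T, fun i => mp (eT.symm i).1 (eT.symm i).2,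
        fun i => θp (eT.symm i).1 (eT.symm i).2,
        fun i => ep (eT.symm i).1 (eT.symm i).2,
        fun i => hdiv (eT.symm i).1 (eT.symm i).2, ?_⟩
      intro x hx
      have hxall : ∀ p ∈ t₁, p.2.1.Realize (Sum.elim x p.2.2) := (hΦspec x).1 hx
      obtain ⟨p, hpt, hpnr⟩ := hnot x
      have hpt₂ : p ∈ t₂ := by
        rw [ht₂, Finset.mem_filter]
        refine ⟨hpt, fun hpΓ1 => hpnr (hxall p ?_)⟩
        rw [ht₁, Finset.mem_filter]; exact ⟨hpt, hpΓ1⟩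
      have hψreal : (ψf ⟨p, hpt₂⟩).Realize (Sum.elim x p.2.2) := by
        have := hψeq ⟨p, hpt₂⟩
        rw [this] at hpnr
        rw [Formula.realize_not] at hpnr
        exact not_not.1 hpnr
      obtain ⟨k, hk⟩ := himp ⟨p, hpt₂⟩ x hψreal
      refine ⟨eT ⟨⟨p, hpt₂⟩, k⟩, ?_⟩
      have hs := Equiv.symm_apply_apply eT ⟨⟨p, hpt₂⟩, k⟩
      exact Eq.mpr (congrArg (fun s : T => (θp s.1 s.2).Realize (Sum.elim x (ep s.1 s.2))) hs) hk
    exact hind nΦ Φ cΦ hcΦmem haΦ hforksΦ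
  obtain ⟨a', ha'⟩ := hsat α A hα hAκ (Γ1 ∪ Γ2) hparams hfin
  refine ⟨a', ?_, ?_⟩
  · intro n φ cc hcc
    constructor
    · intro h
      by_contra hna
      have : (⟨n, (φ.not, cc)⟩ : FmlP L 𝕄 α) ∈ Γ1 :=
        ⟨hcc, Formula.realize_not.2 hna⟩
      have := ha' _ (Set.mem_union_left _ this)
      rw [show ((⟨n, (φ.not, cc)⟩ : FmlP L 𝕄 α)).2.1 = φ.not from rfl] at this
      rw [Formula.realize_not] at this
      exact this h
    · intro h
      exact ha' ⟨n, (φ, cc)⟩ (Set.mem_union_left _ ⟨hcc, h⟩)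
  · intro n φ d hd hreal hforks
    have hdA : ∀ i, d i ∈ A := by
      intro i
      rcases hd i with h | h
      · exact Set.mem_union_left _ (Set.mem_union_left _ h)
      · rw [Set.Sum.elim_range] at h
        rcases h with h | h
        · exact Set.mem_union_left _ (Set.mem_union_right _ h)
        · exact Set.mem_union_right _ h
    have hmem : (⟨n, (φ.not, d)⟩ : FmlP L 𝕄 α) ∈ Γ2 := ⟨φ, rfl, hdA, hforks⟩
    have := ha' _ (Set.mem_union_right _ hmem)
    rw [show ((⟨n, (φ.not, d)⟩ : FmlP L 𝕄 α)).2.1 = φ.not from rfl] at this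
    rw [Formula.realize_not] at this
    exact this hreal

end Aux

/-- Course-of-values recursion for sequences. -/
noncomputable def seqRec {X : Sort w} (pick : ∀ i : ℕ, (∀ j, j < i → X) → X) : ℕ → X
  | i => pick i (fun j hj => seqRec pick j)
termination_by i => i
decreasing_by exact hj

theorem seqRec_eq {X : Sort w} (pick : ∀ i : ℕ, (∀ j, j < i → X) → X) (i : ℕ) :
    seqRec pick i = pick i (fun j _ => seqRec pick j) := by
  rw [seqRec]

section Aux2

variable {L : FirstOrder.Language.{u, u}} {𝕄 : Type u} [L.Structure 𝕄]

theorem exists_realizesType {κ : Cardinal.{u}} (hsat : IsSaturated L 𝕄 κ)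
    (hκ : Cardinal.aleph0 < κ) {γ : Type v} [Fintype γ] (q : GlobalType L 𝕄 γ)
    (C : Set 𝕄) (hC : Cardinal.mk C < κ) : ∃ d : γ → 𝕄, RealizesType q d C := by
  obtain ⟨d, hd⟩ := realize_set_of_finsat_fin hsat hκ {p ∈ q.carrier | ∀ i, p.2.2 i ∈ C} C hC
    (fun p hp => hp.2) (fun t ht => q.consistent t (fun p hp => (ht hp).1))
  exact ⟨d, fun n φ e he hm => hd ⟨n, (φ, e)⟩ ⟨hm, he⟩⟩

theorem mk_union_countable_lt {κ : Cardinal.{u}} (hκ : Cardinal.aleph0 < κ)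
    {Ms U : Set 𝕄} (hMs : Cardinal.mk Ms < κ) (hU : U.Countable) :
    Cardinal.mk ↥(Ms ∪ U) < κ :=
  lt_of_le_of_lt (Cardinal.mk_union_le _ _)
    (Cardinal.add_lt_of_lt hκ.le hMs (lt_of_le_of_lt hU.le_aleph0 hκ))

theorem countable_bdd_ranges {γ : Type v} [Fintype γ] (B : ℕ → γ → 𝕄) (i : ℕ) :
    (⋃ (j : ℕ) (_ : j < i), Set.range (B j)).Countable :=
  Set.countable_iUnion fun j => Set.countable_iUnion fun _ => (Set.finite_range _).countable

/-- Construction of a coheir Morley sequence of a global type starting at a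
prescribed realization of its restriction to `Ms`. -/
theorem exists_morley_from {κ : Cardinal.{u}} (hsat : IsSaturated L 𝕄 κ)
    (hκ : Cardinal.aleph0 < κ) {γ : Type v} [Fintype γ] {Ms : Set 𝕄}
    (hMs : Cardinal.mk Ms < κ) (q : GlobalType L 𝕄 γ) (d0 : γ → 𝕄)
    (hd0 : RealizesType q d0 Ms) :
    ∃ D : ℕ → γ → 𝕄, D 0 = d0 ∧ ∀ i, RealizesType q (D i)
      (Ms ∪ ⋃ (j : ℕ) (_ : j < i), Set.range (D j)) := by
  classical
  have hex : ∀ (U : Set 𝕄), U.Countable → ∃ d, RealizesType q d (Ms ∪ U) := fun U hU =>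
    exists_realizesType hsat hκ q _ (mk_union_countable_lt hκ hMs hU)
  let pick : ∀ i : ℕ, (∀ j, j < i → γ → 𝕄) → γ → 𝕄 := fun i prev =>
    if i = 0 then d0 else
      Classical.choose (hex (⋃ (j : ℕ) (_ : j < i), Set.range (if h : j < i then prev j h else d0))
        (Set.countable_iUnion fun j => Set.countable_iUnion fun _ =>
          (Set.finite_range _).countable))
  refine ⟨seqRec pick, by rw [seqRec_eq]; simp [pick], ?_⟩
  intro i
  rw [seqRec_eq]
  by_cases h0 : i = 0
  · subst h0
    simp only [pick, if_pos rfl]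
    refine RealizesType.mono hd0 (Set.union_subset subset_rfl ?_)
    intro x hx
    simp only [Set.mem_iUnion] at hx
    obtain ⟨j, hj, -⟩ := hx
    omega
  · simp only [pick, if_neg h0]
    refine RealizesType.mono (Classical.choose_spec (hex _
      (Set.countable_iUnion fun j => Set.countable_iUnion fun _ =>
        (Set.finite_range _).countable))) (Set.union_subset_union_right _ ?_)
    intro x hx
    simp only [Set.mem_iUnion] at hx ⊢
    obtain ⟨j, hj, hx⟩ := hx
    exact ⟨j, hj, by rw [dif_pos hj]; exact hx⟩

/-- All coheir Morley sequences of a fixed global type finitely satisfiable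
in `Ms` have the same type over `Ms` (on initial segments). -/
theorem morley_same_type {Ms : Set 𝕄} {ν : Type v} [Fintype ν] (q : GlobalType L 𝕄 ν)
    (hq : q.FinSatInM Ms) (B B' : ℕ → ν → 𝕄)
    (hB : ∀ i, RealizesType q (B i) (Ms ∪ ⋃ (j : ℕ) (_ : j < i), Set.range (B j)))
    (hB' : ∀ i, RealizesType q (B' i) (Ms ∪ ⋃ (j : ℕ) (_ : j < i), Set.range (B' j))) :
    ∀ n : ℕ, EqTpOver L Ms (fun p : Fin n × ν => B p.1 p.2)
      (fun p : Fin n × ν => B' p.1 p.2) := by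
  intro n
  induction n with
  | zero =>
    intro k φ e he
    have heq : (fun p : Fin 0 × ν => B p.1 p.2) = (fun p : Fin 0 × ν => B' p.1 p.2) := by
      funext p; exact absurd p.1.2 (Nat.not_lt_zero _)
    rw [heq]
  | succ n ih =>
    intro k φ e he
    classical
    let δ := (Fin n × ν) ⊕ Fin k
    let eδ : δ ≃ Fin (Fintype.card δ) := Fintype.equivFin δ
    let ρ : (Fin (n + 1) × ν) ⊕ Fin k → ν ⊕ Fin (Fintype.card δ) :=
      Sum.elim
        (fun iw => if h : (iw.1 : ℕ) < n then
          Sum.inr (eδ (Sum.inl (⟨(iw.1 : ℕ), h⟩, iw.2))) else Sum.inl iw.2)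
        (fun j => Sum.inr (eδ (Sum.inr j)))
    let φh : L.Formula (ν ⊕ Fin (Fintype.card δ)) := φ.relabel ρ
    let dC : (ℕ → ν → 𝕄) → Fin (Fintype.card δ) → 𝕄 := fun C =>
      (Sum.elim (fun p : Fin n × ν => C p.1 p.2) e) ∘ eδ.symm
    have hfun : ∀ C : ℕ → ν → 𝕄,
        Sum.elim (C n) (dC C) ∘ ρ = Sum.elim (fun p : Fin (n + 1) × ν => C p.1 p.2) e := by
      intro C; funext z
      cases z with
      | inl p =>
        by_cases h : (p.1 : ℕ) < n
        · simp only [ρ, Function.comp_apply, Sum.elim_inl, dif_pos h, Sum.elim_inr, dC,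
            Equiv.symm_apply_apply]
        · have hi : (p.1 : ℕ) = n := by have := p.1.2; omega
          simp only [ρ, Function.comp_apply, Sum.elim_inl, hi, dif_neg (lt_irrefl n)]
      | inr j =>
        simp only [ρ, Function.comp_apply, Sum.elim_inr, dC, Equiv.symm_apply_apply]
    have hdparams : ∀ (C : ℕ → ν → 𝕄), ∀ i, dC C i ∈ Ms ∪ ⋃ (j : ℕ) (_ : j < n),
        Set.range (C j) := by
      intro C i
      rcases hs : eδ.symm i with p | j
      · refine Set.mem_union_right _ ?_
        simp only [dC, Function.comp_apply, hs, Sum.elim_inl]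
        exact Set.mem_iUnion.2 ⟨p.1, Set.mem_iUnion.2 ⟨p.1.2, Set.mem_range_self _⟩⟩
      · refine Set.mem_union_left _ ?_
        simp only [dC, Function.comp_apply, hs, Sum.elim_inr]
        exact he j
    have hmem : ∀ (C : ℕ → ν → 𝕄), RealizesType q (C n)
          (Ms ∪ ⋃ (j : ℕ) (_ : j < n), Set.range (C j)) →
        (φ.Realize (Sum.elim (fun p : Fin (n + 1) × ν => C p.1 p.2) e) ↔
          (⟨Fintype.card δ, (φh, dC C)⟩ : FmlP L 𝕄 ν) ∈ q.carrier) := by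
      intro C hC
      rw [← hfun C]
      have : (Sum.elim (C n) (dC C) ∘ ρ) = _ := rfl
      rw [show φ.Realize (Sum.elim (C n) (dC C) ∘ ρ) ↔ φh.Realize (Sum.elim (C n) (dC C))
        from (Formula.realize_relabel).symm]
      exact realize_iff_mem hC φh (dC C) (hdparams C)
    have hinv : EqTpOver L Ms (dC B) (dC B') :=
      EqTpOver.comp_elim ih e he eδ.symm
    rw [hmem B (hB n), hmem B' (hB' n)]
    exact ⟨fun h => q.invariant_param hq hinv h,
      fun h => q.invariant_param hq hinv.symm h⟩

theorem realize_relabel_map_right {α : Type u'} {γ : Type v} {δ : Type w}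
    (θ : L.Formula (α ⊕ γ)) (h : γ → δ) (a : α → 𝕄) (d : δ → 𝕄) :
    (θ.relabel (Sum.map id h)).Realize (Sum.elim a d) ↔ θ.Realize (Sum.elim a (d ∘ h)) := by
  rw [Formula.realize_relabel]
  constructor <;> intro hh <;> (convert hh using 2; funext z; cases z <;> rfl)

theorem realizes_of_tpSet_subset {α : Type v} {q : GlobalType L 𝕄 α} {C : Set 𝕄}
    {g : α → 𝕄} (h : tpSet C g ⊆ q.carrier) : RealizesType q g C := by
  classical
  intro n θ e he hm
  by_contra hne
  have hnot : (⟨n, (θ.not, e)⟩ : FmlP L 𝕄 α) ∈ q.carrier :=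
    h ⟨he, Formula.realize_not.2 hne⟩
  obtain ⟨x, hx⟩ := q.consistent ({⟨n, (θ, e)⟩, ⟨n, (θ.not, e)⟩} : Finset (FmlP L 𝕄 α)) (by
    intro p hp
    simp only [Finset.coe_insert, Finset.coe_singleton, Set.mem_insert_iff,
      Set.mem_singleton_iff] at hp
    rcases hp with rfl | rfl
    · exact hm
    · exact hnot)
  have h1 : θ.Realize (Sum.elim x e) := hx ⟨n, (θ, e)⟩ (by simp)
  have h2 : θ.not.Realize (Sum.elim x e) := hx ⟨n, (θ.not, e)⟩ (by simp)
  rw [Formula.realize_not] at h2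
  exact h2 h1

/-- Restriction of a global type along a coordinate map. -/
theorem restrict_global {μ : Type v} {ν : Type w} (q' : GlobalType L 𝕄 μ) {Ms : Set 𝕄}
    (hq' : q'.FinSatInM Ms) (ρ : ν → μ) :
    ∃ qj : GlobalType L 𝕄 ν, qj.FinSatInM Ms ∧
      ∀ (n : ℕ) (θ : L.Formula (ν ⊕ Fin n)) (e : Fin n → 𝕄),
        ((⟨n, (θ, e)⟩ : FmlP L 𝕄 ν) ∈ qj.carrier ↔
          (⟨n, (θ.relabel (Sum.map ρ id), e)⟩ : FmlP L 𝕄 μ) ∈ q'.carrier) := by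
  classical
  let lift : FmlP L 𝕄 ν → FmlP L 𝕄 μ := fun p => ⟨p.1, (p.2.1.relabel (Sum.map ρ id), p.2.2)⟩
  have hnot : ∀ (n : ℕ) (θ : L.Formula (ν ⊕ Fin n)),
      (θ.not).relabel (Sum.map ρ id) = (θ.relabel (Sum.map ρ id)).not := fun n θ => rfl
  refine ⟨⟨{p | lift p ∈ q'.carrier}, ?_, ?_⟩, ?_, fun n θ e => Iff.rfl⟩
  · intro t ht
    obtain ⟨d, hd⟩ := q'.consistent (t.image lift) (by
      intro p hp
      rw [Finset.coe_image] at hp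
      obtain ⟨p₀, hp₀, rfl⟩ := hp
      exact ht hp₀)
    refine ⟨d ∘ ρ, fun p hp => ?_⟩
    have := hd (lift p) (Finset.mem_image_of_mem _ hp)
    rw [show (lift p).2.1 = p.2.1.relabel (Sum.map ρ id) from rfl] at this
    rw [realize_relabel_map_left] at this
    exact this
  · intro n θ e
    rcases q'.complete n (θ.relabel (Sum.map ρ id)) e with h | h
    · exact Or.inl h
    · refine Or.inr ?_
      show lift ⟨n, (θ.not, e)⟩ ∈ q'.carrier
      have : lift ⟨n, (θ.not, e)⟩ = ⟨n, ((θ.relabel (Sum.map ρ id)).not, e)⟩ := by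
        rw [show (lift ⟨n, (θ.not, e)⟩ : FmlP L 𝕄 μ)
          = ⟨n, ((θ.not).relabel (Sum.map ρ id), e)⟩ from rfl, hnot]
      rw [this]
      exact h
  · intro t ht
    obtain ⟨d, hdMs, hd⟩ := hq' (t.image lift) (by
      intro p hp
      rw [Finset.coe_image] at hp
      obtain ⟨p₀, hp₀, rfl⟩ := hp
      exact ht hp₀)
    refine ⟨d ∘ ρ, fun i => hdMs (ρ i), fun p hp => ?_⟩
    have := hd (lift p) (Finset.mem_image_of_mem _ hp)
    rw [show (lift p).2.1 = p.2.1.relabel (Sum.map ρ id) from rfl] at this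
    rw [realize_relabel_map_left] at this
    exact this

/-- If a tuple realizes a formula along one Morley sequence of `q`, some tuple
realizes it along any other Morley sequence of `q`. -/
theorem exists_realize_all_of_morley {κ : Cardinal.{u}} (hsat : IsSaturated L 𝕄 κ)
    (hκ : Cardinal.aleph0 < κ) {Ms : Set 𝕄} (hMsk : Cardinal.mk Ms < κ) {mm : ℕ}
    (q : GlobalType L 𝕄 (Fin mm)) (hq : q.FinSatInM Ms) (C C' : ℕ → Fin mm → 𝕄)
    (hC : ∀ i, RealizesType q (C i) (Ms ∪ ⋃ (j : ℕ) (_ : j < i), Set.range (C j)))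
    (hC' : ∀ i, RealizesType q (C' i) (Ms ∪ ⋃ (j : ℕ) (_ : j < i), Set.range (C' j)))
    {α : Type v} [Fintype α] (φ : L.Formula (α ⊕ Fin mm)) (x : α → 𝕄)
    (hx : ∀ i, φ.Realize (Sum.elim x (C i))) :
    ∃ x' : α → 𝕄, ∀ i : ℕ, φ.Realize (Sum.elim x' (C' i)) := by
  classical
  have htrans := morley_same_type q hq C C' hC hC'
  -- the formula asserting that `φ` is consistent along the first `n` rows
  have key : ∀ n : ℕ, ∃ x' : α → 𝕄, ∀ i : Fin n, φ.Realize (Sum.elim x' (C' i)) := by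
    intro n
    let body : L.Formula (α ⊕ (Fin n × Fin mm)) :=
      fsInf Finset.univ
        (fun i : Fin n => φ.relabel (Sum.map id (fun w => (i, w))))
    let Ξ : L.Formula (Fin n × Fin mm) := fIExs body (Sum.elim Sum.inr Sum.inl)
    have hΞ : ∀ D : ℕ → Fin mm → 𝕄,
        (Ξ.Realize (fun p : Fin n × Fin mm => D p.1 p.2) ↔
          ∃ y : α → 𝕄, ∀ i : Fin n, φ.Realize (Sum.elim y (D i))) := by
      intro D
      rw [show Ξ = fIExs body (Sum.elim Sum.inr Sum.inl) from rfl, realize_fIExs]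
      apply exists_congr
      intro y
      have hfn : (fun a => Sum.elim (fun p : Fin n × Fin mm => D p.1 p.2) y
          ((Sum.elim Sum.inr Sum.inl : α ⊕ (Fin n × Fin mm) → _) a))
          = Sum.elim y (fun p : Fin n × Fin mm => D p.1 p.2) := by
        funext z; cases z <;> rfl
      rw [hfn]
      rw [show (body.Realize (Sum.elim y fun p : Fin n × Fin mm => D p.1 p.2)) ↔
        ∀ i ∈ Finset.univ, ((fun i : Fin n => φ.relabel
            (Sum.map id (fun w : Fin mm => (i, w)))) i).Realize
          (Sum.elim y fun p : Fin n × Fin mm => D p.1 p.2) from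
        realize_fsInf _ _ _ _]
      constructor
      · intro h i
        have := h i (Finset.mem_univ _)
        rw [realize_relabel_map_right] at this
        exact this
      · intro h i _
        rw [realize_relabel_map_right]
        exact h i
    have hC1 : Ξ.Realize (fun p : Fin n × Fin mm => C p.1 p.2) :=
      (hΞ C).2 ⟨x, fun i => hx i⟩
    have hC2 : Ξ.Realize (fun p : Fin n × Fin mm => C' p.1 p.2) := by
      have := htrans n 0 (Ξ.relabel Sum.inl) (fun i => i.elim0) (fun i => i.elim0)
      rw [Formula.realize_relabel, Formula.realize_relabel] at this
      have h1 : (Sum.elim (fun p : Fin n × Fin mm => C p.1 p.2)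
          (fun i : Fin 0 => (i.elim0 : 𝕄)) ∘ Sum.inl)
          = fun p : Fin n × Fin mm => C p.1 p.2 := rfl
      have h2 : (Sum.elim (fun p : Fin n × Fin mm => C' p.1 p.2)
          (fun i : Fin 0 => (i.elim0 : 𝕄)) ∘ Sum.inl)
          = fun p : Fin n × Fin mm => C' p.1 p.2 := rfl
      rw [h1, h2] at this
      exact this.1 hC1
    exact (hΞ C').1 hC2
  -- realize the whole infinite set by saturation
  obtain ⟨x', hx'⟩ := realize_set_of_finsat_fin hsat hκ
    {p : FmlP L 𝕄 α | ∃ i : ℕ, p = ⟨mm, (φ, C' i)⟩}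
    (Ms ∪ ⋃ i : ℕ, Set.range (C' i))
    (mk_union_countable_lt hκ hMsk
      (Set.countable_iUnion fun i => (Set.finite_range _).countable))
    (by rintro p ⟨i, rfl⟩ w
        exact Set.mem_union_right _ (Set.mem_iUnion.2 ⟨i, Set.mem_range_self _⟩))
    (by
      intro t ht
      have hch : ∀ p : {p // p ∈ t}, ∃ i : ℕ, p.1 = ⟨mm, (φ, C' i)⟩ := fun p => ht p.2
      choose idx hidx using hch
      set n := (Finset.univ.sup fun p : {p // p ∈ t} => idx p) + 1 with hn
      obtain ⟨y, hy⟩ := key n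
      refine ⟨y, fun p hp => ?_⟩
      have hlt : idx ⟨p, hp⟩ < n := by
        rw [hn]
        exact Nat.lt_succ_of_le (Finset.le_sup (Finset.mem_univ _))
      have hres := hy ⟨idx ⟨p, hp⟩, hlt⟩
      have hpe : p = ⟨mm, (φ, C' (idx ⟨p, hp⟩))⟩ := hidx ⟨p, hp⟩
      rw [hpe]
      exact hres)
  refine ⟨x', fun i => ?_⟩
  exact hx' ⟨mm, (φ, C' i)⟩ ⟨i, rfl⟩

/-- Projection map used for existentially quantifying the `νc`-variables. -/
def projL (νb : Type v) (νc : Type w) (k₂ : ℕ) :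
    (νb ⊕ νc) ⊕ Fin k₂ → (νb ⊕ Fin k₂) ⊕ νc :=
  Sum.elim (Sum.elim (Sum.inl ∘ Sum.inl) Sum.inr) (Sum.inl ∘ Sum.inr)

theorem realize_projL {M' : Type u'} [L.Structure M'] {νb : Type v} {νc : Type w}
    [Finite νc] {k₂ : ℕ} (Θ : L.Formula ((νb ⊕ νc) ⊕ Fin k₂)) (d : νb → M')
    (e' : Fin k₂ → M') :
    (fIExs Θ (projL νb νc k₂)).Realize (Sum.elim d e') ↔
      ∃ w : νc → M', Θ.Realize (Sum.elim (Sum.elim d w) e') := by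
  rw [realize_fIExs]
  refine exists_congr fun w => ?_
  rw [show (fun z => Sum.elim (Sum.elim d e') w (projL νb νc k₂ z))
    = Sum.elim (Sum.elim d w) e' from by funext z; rcases z with (z | z) | z <;> rfl]

/-- Left extension of a finitely satisfiable global type by new variables,
containing the type of a prescribed joint tuple over `Ms`. -/
theorem exists_joint_global {Ms : Set 𝕄} (hMs : IsElemSubmodel L Ms)
    {νb : Type v} {νc : Type w} [Fintype νb] [Fintype νc]
    (q : GlobalType L 𝕄 νb) (hqfs : q.FinSatInM Ms)
    (b : νb → 𝕄) (c : νc → 𝕄) (hqb : RealizesType q b Ms) :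
    ∃ q' : GlobalType L 𝕄 (νb ⊕ νc), q'.FinSatInM Ms ∧
      (∀ (n : ℕ) (θ : L.Formula (νb ⊕ Fin n)) (e : Fin n → 𝕄),
        (⟨n, (θ, e)⟩ : FmlP L 𝕄 νb) ∈ q.carrier →
        (⟨n, (θ.relabel (Sum.map Sum.inl id), e)⟩ : FmlP L 𝕄 (νb ⊕ νc)) ∈ q'.carrier) ∧
      tpSet Ms (Sum.elim b c) ⊆ q'.carrier := by
  classical
  let lift : FmlP L 𝕄 νb → FmlP L 𝕄 (νb ⊕ νc) := fun p =>
    ⟨p.1, (p.2.1.relabel (Sum.map Sum.inl id), p.2.2)⟩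
  have hFS : ∀ t : Finset (FmlP L 𝕄 (νb ⊕ νc)),
      ↑t ⊆ lift '' q.carrier ∪ tpSet Ms (Sum.elim b c) →
      ∃ m : (νb ⊕ νc) → 𝕄, (∀ i, m i ∈ Ms) ∧
        ∀ p ∈ t, p.2.1.Realize (Sum.elim m p.2.2) := by
    intro t ht
    set t₂ := t.filter (· ∈ tpSet Ms (Sum.elim b c)) with ht₂
    set t₁ := t.filter (· ∉ tpSet Ms (Sum.elim b c)) with ht₁
    have ht₁sub : ∀ p ∈ t₁, p ∈ lift '' q.carrier := by
      intro p hp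
      have h1 := Finset.mem_filter.1 hp
      rcases ht h1.1 with h | h
      · exact h
      · exact absurd h h1.2
    obtain ⟨k₂, Θ, e₂, he₂src, hΘspec⟩ := finsetConj t₂
    have he₂ : ∀ i, e₂ i ∈ Ms := by
      intro i; obtain ⟨p, hp, w, hpe⟩ := he₂src i
      rw [hpe]; exact ((Finset.mem_filter.1 hp).2).1 w
    have hΘbc : Θ.Realize (Sum.elim (Sum.elim b c) e₂) :=
      (hΘspec _).2 fun p hp => ((Finset.mem_filter.1 hp).2).2
    let Ξ : L.Formula (νb ⊕ Fin k₂) := fIExs Θ (projL νb νc k₂)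
    have hΞb : Ξ.Realize (Sum.elim b e₂) := (realize_projL Θ b e₂).2 ⟨c, hΘbc⟩
    have hΞq : (⟨k₂, (Ξ, e₂)⟩ : FmlP L 𝕄 νb) ∈ q.carrier :=
      (realize_iff_mem hqb Ξ e₂ he₂).1 hΞb
    have hch : ∀ p : {p // p ∈ t₁}, ∃ p₀, p₀ ∈ q.carrier ∧ lift p₀ = p.1 :=
      fun p => ht₁sub p.1 p.2
    choose orig horig1 horig2 using hch
    let t₀ : Finset (FmlP L 𝕄 νb) := insert ⟨k₂, (Ξ, e₂)⟩ (t₁.attach.image orig)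
    obtain ⟨mB, hmBMs, hmB⟩ := hqfs t₀ (by
      intro p hp
      rw [Finset.mem_coe] at hp
      rcases Finset.mem_insert.1 hp with rfl | hp'
      · exact hΞq
      · obtain ⟨pp, -, rfl⟩ := Finset.mem_image.1 hp'
        exact horig1 pp)
    have hmBΞ : Ξ.Realize (Sum.elim mB e₂) := hmB _ (Finset.mem_insert_self _ _)
    obtain ⟨S, hSeq⟩ := hMs
    have hmem1 : ∀ v, mB v ∈ S := fun v => by
      rw [← SetLike.mem_coe, hSeq]; exact hmBMs v
    have hmem2 : ∀ j, e₂ j ∈ S := fun j => by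
      rw [← SetLike.mem_coe, hSeq]; exact he₂ j
    let dS : νb → S := fun v => ⟨mB v, hmem1 v⟩
    let eS : Fin k₂ → S := fun j => ⟨e₂ j, hmem2 j⟩
    have h1 : Ξ.Realize (⇑S.subtype ∘ Sum.elim dS eS) := by
      rw [show ⇑S.subtype ∘ Sum.elim dS eS = Sum.elim mB e₂ from by
        funext z; cases z <;> rfl]
      exact hmBΞ
    have h2 : Ξ.Realize (Sum.elim dS eS) := (S.subtype.map_formula Ξ _).1 h1
    obtain ⟨wS, hwS⟩ := (realize_projL Θ dS eS).1 h2
    have h3 : Θ.Realize (⇑S.subtype ∘ Sum.elim (Sum.elim dS wS) eS) :=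
      (S.subtype.map_formula Θ _).2 hwS
    have h4 : Θ.Realize (Sum.elim (Sum.elim mB (fun y => (wS y : 𝕄))) e₂) := by
      rw [show Sum.elim (Sum.elim mB (fun y => (wS y : 𝕄))) e₂
        = ⇑S.subtype ∘ Sum.elim (Sum.elim dS wS) eS from by
        funext z; rcases z with (z | z) | z <;> rfl]
      exact h3
    refine ⟨Sum.elim mB (fun y => (wS y : 𝕄)), ?_, ?_⟩
    · intro z
      cases z with
      | inl v => exact hmBMs v
      | inr y =>
        show (wS y : 𝕄) ∈ Ms
        rw [← hSeq]
        exact (wS y).2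
    · intro p hp
      by_cases hmem : p ∈ tpSet Ms (Sum.elim b c)
      · exact (hΘspec _).1 h4 p (Finset.mem_filter.2 ⟨hp, hmem⟩)
      · have hp₁ : p ∈ t₁ := Finset.mem_filter.2 ⟨hp, hmem⟩
        have hpe : lift (orig ⟨p, hp₁⟩) = p := horig2 ⟨p, hp₁⟩
        rw [← hpe]
        show ((orig ⟨p, hp₁⟩).2.1.relabel (Sum.map Sum.inl id)).Realize
          (Sum.elim (Sum.elim mB (fun y => (wS y : 𝕄))) (orig ⟨p, hp₁⟩).2.2)
        rw [realize_relabel_map_left]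
        exact hmB _ (Finset.mem_insert_of_mem
          (Finset.mem_image.2 ⟨⟨p, hp₁⟩, Finset.mem_attach _ _, rfl⟩))

  obtain ⟨q', hq'sub, hq'fs⟩ := exists_global_finSatInM (Ms := Ms)
    (lift '' q.carrier ∪ tpSet Ms (Sum.elim b c)) hFS
  exact ⟨q', hq'fs,
    fun n θ e hm => hq'sub (Set.mem_union_left _ ⟨⟨n, (θ, e)⟩, hm, rfl⟩),
    fun p hp => hq'sub (Set.mem_union_right _ hp)⟩

/-- Conant-forking coincides with Conant-dividing. -/
theorem conantForks_iff_divides {κ : Cardinal.{u}} (hmonster : IsMonster L 𝕄 κ)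
    (Ms : Set 𝕄) (hMs : IsElemSubmodel L Ms) (hMssmall : Cardinal.mk Ms < κ)
    (r m : ℕ) (φ : L.Formula (Fin r ⊕ Fin m)) (b : Fin m → 𝕄) :
    ConantForks L Ms φ b ↔ ConantDivides L Ms φ b := by
  classical
  obtain ⟨hκ, hsat, -⟩ := hmonster
  constructor
  · rintro ⟨N, mj, ψ, cj, hdiv, himp⟩
    intro B hBmor hB0
    rintro ⟨a, ha⟩
    obtain ⟨q, hqfs, hqreal⟩ := hBmor
    let ζ := Σ j : Fin N, Fin (mj j)
    let c : ζ → 𝕄 := fun s => cj s.1 s.2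
    have hqb : RealizesType q b Ms := by
      have h0 := hqreal 0
      rw [hB0] at h0
      exact h0.mono Set.subset_union_left
    obtain ⟨q', hq'fs, hlift, htp⟩ := exists_joint_global hMs q hqfs b c hqb
    have hbc0 : RealizesType q' (Sum.elim b c) Ms := realizes_of_tpSet_subset htp
    obtain ⟨D, hD0, hDmor⟩ := exists_morley_from hsat hκ hMssmall q' (Sum.elim b c) hbc0
    let B' : ℕ → Fin m → 𝕄 := fun i => D i ∘ Sum.inl
    have hB'mor : ∀ i, RealizesType q (B' i)
        (Ms ∪ ⋃ (j : ℕ) (_ : j < i), Set.range (B' j)) := by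
      intro i n θ e he hm
      have hmem' := hlift n θ e hm
      have hpar : ∀ w, e w ∈ Ms ∪ ⋃ (j : ℕ) (_ : j < i), Set.range (D j) := by
        intro w
        rcases he w with h | h
        · exact Set.mem_union_left _ h
        · refine Set.mem_union_right _ ?_
          simp only [Set.mem_iUnion] at h ⊢
          obtain ⟨j, hj, v, hv⟩ := h
          exact ⟨j, hj, Sum.inl v, hv⟩
      have hreal := hDmor i n (θ.relabel (Sum.map Sum.inl id)) e hpar hmem'
      rw [realize_relabel_map_left] at hreal
      exact hreal
    obtain ⟨a', ha'⟩ := exists_realize_all_of_morley hsat hκ hMssmall q hqfs B B'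
      hqreal hB'mor φ a ha
    -- the implication formula, as a member of `q'`
    let α₀ := Fin r ⊕ (Fin m ⊕ ζ)
    let φL : L.Formula α₀ := φ.relabel (Sum.map id Sum.inl)
    let ψ' : Fin N → L.Formula α₀ := fun j =>
      (ψ j).relabel (Sum.map id (fun w => Sum.inr ⟨j, w⟩))
    let ι : L.Formula (Fin m ⊕ ζ) :=
      fIAlls (φL.imp (fsSup Finset.univ ψ')) (Sum.elim Sum.inr Sum.inl)
    have hι : ∀ v : (Fin m ⊕ ζ) → 𝕄, ι.Realize v ↔ ∀ x : Fin r → 𝕄,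
        φ.Realize (Sum.elim x (v ∘ Sum.inl)) →
        ∃ j, (ψ j).Realize (Sum.elim x (fun w => v (Sum.inr ⟨j, w⟩))) := by
      intro v
      rw [show ι = fIAlls (φL.imp (fsSup Finset.univ ψ'))
        (Sum.elim Sum.inr Sum.inl) from rfl, realize_fIAlls]
      refine forall_congr' fun x => ?_
      rw [show (fun z => Sum.elim v x ((Sum.elim Sum.inr Sum.inl : α₀ → _) z))
        = Sum.elim x v from by funext z; cases z <;> rfl]
      rw [Formula.realize_imp]
      constructor
      · intro h hφ
        obtain ⟨j, -, hj⟩ := (realize_fsSup _ _ _ _).1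
          (h ((realize_relabel_map_right φ Sum.inl x v).2 hφ))
        exact ⟨j, (realize_relabel_map_right (ψ j) _ x v).1 hj⟩
      · intro h hφ'
        obtain ⟨j, hj⟩ := h ((realize_relabel_map_right φ Sum.inl x v).1 hφ')
        exact (realize_fsSup _ _ _ _).2
          ⟨j, Finset.mem_univ _, (realize_relabel_map_right (ψ j) _ x v).2 hj⟩
    have hιbc : ι.Realize (Sum.elim b c) := by
      refine (hι _).2 ?_
      intro x hφ
      obtain ⟨j, hj⟩ := himp x hφ
      exact ⟨j, hj⟩
    have hιq' : (⟨0, (ι.relabel Sum.inl, fun w : Fin 0 => (w.elim0 : 𝕄))⟩ :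
        FmlP L 𝕄 (Fin m ⊕ ζ)) ∈ q'.carrier := by
      refine htp ⟨fun w => w.elim0, ?_⟩
      rw [show ((⟨0, (ι.relabel Sum.inl, fun w : Fin 0 => (w.elim0 : 𝕄))⟩ :
        FmlP L 𝕄 (Fin m ⊕ ζ))).2.1 = ι.relabel Sum.inl from rfl]
      rw [Formula.realize_relabel]
      rw [show (Sum.elim (Sum.elim b c) (fun w : Fin 0 => (w.elim0 : 𝕄)) ∘ Sum.inl)
        = Sum.elim b c from funext fun z => rfl]
      exact hιbc
    have hιD : ∀ i, ι.Realize (D i) := by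
      intro i
      have h := hDmor i 0 (ι.relabel Sum.inl) (fun w : Fin 0 => (w.elim0 : 𝕄))
        (fun w => w.elim0) hιq'
      rw [Formula.realize_relabel] at h
      rw [show (Sum.elim (D i) (fun w : Fin 0 => (w.elim0 : 𝕄)) ∘ Sum.inl) = D i
        from funext fun z => rfl] at h
      exact h
    have hj : ∀ i : ℕ, ∃ j, (ψ j).Realize
        (Sum.elim a' (fun w => D i (Sum.inr ⟨j, w⟩))) := by
      intro i
      exact (hι (D i)).1 (hιD i) a' (ha' i)
    choose jf hjf using hj
    obtain ⟨j0, hfib⟩ := Finite.exists_infinite_fiber jf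
    have hSinf : (jf ⁻¹' {j0}).Infinite := Set.infinite_coe_iff.1 hfib
    let g : ℕ → ℕ := fun k => Nat.rec 0 (fun _ gk => Classical.choose (hSinf.exists_gt gk)) k
    have hgmem : ∀ k, g (k + 1) ∈ jf ⁻¹' {j0} := fun k => by
      obtain ⟨hb, -⟩ := Classical.choose_spec (hSinf.exists_gt (g k))
      exact hb
    have hglt : ∀ k, g k < g (k + 1) := fun k => by
      obtain ⟨-, hl⟩ := Classical.choose_spec (hSinf.exists_gt (g k))
      exact hl
    have hgsm : StrictMono g := strictMono_nat_of_lt_succ hglt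
    let E : ℕ → Fin (mj j0) → 𝕄 := fun k w => D (g k) (Sum.inr ⟨j0, w⟩)
    have hE0 : E 0 = cj j0 := by
      funext w
      show D 0 (Sum.inr ⟨j0, w⟩) = cj j0 w
      rw [hD0]
      rfl
    obtain ⟨qj, hqjfs, hqjmem⟩ := restrict_global q' hq'fs
      (fun w : Fin (mj j0) => (Sum.inr ⟨j0, w⟩ : Fin m ⊕ ζ))
    have hEmor : ∀ k, RealizesType qj (E k)
        (Ms ∪ ⋃ (l : ℕ) (_ : l < k), Set.range (E l)) := by
      intro k n θ e he hm
      have hm' := (hqjmem n θ e).1 hm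
      have hpar : ∀ w, e w ∈ Ms ∪ ⋃ (j' : ℕ) (_ : j' < g k), Set.range (D j') := by
        intro w
        rcases he w with h | h
        · exact Set.mem_union_left _ h
        · refine Set.mem_union_right _ ?_
          simp only [Set.mem_iUnion] at h ⊢
          obtain ⟨l, hl, v, hv⟩ := h
          exact ⟨g l, hgsm hl, Sum.inr ⟨j0, v⟩, hv⟩
      have hreal := hDmor (g k) n (θ.relabel (Sum.map _ id)) e hpar hm'
      rw [realize_relabel_map_left] at hreal
      exact hreal
    have hashift : ∀ k, (ψ j0).Realize (Sum.elim a' (E (k + 1))) := by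
      intro k
      have hjfk : jf (g (k + 1)) = j0 := hgmem k
      exact (congrArg (fun j => (ψ j).Realize
        (Sum.elim a' (fun w => D (g (k + 1)) (Sum.inr ⟨j, w⟩)))) hjfk).mp (hjf (g (k + 1)))
    have hEshift : ∀ k, RealizesType qj (E (k + 1))
        (Ms ∪ ⋃ (l : ℕ) (_ : l < k), Set.range (E (l + 1))) := by
      intro k
      refine (hEmor (k + 1)).mono (Set.union_subset Set.subset_union_left ?_)
      intro x hx
      refine Set.mem_union_right _ ?_
      simp only [Set.mem_iUnion] at hx ⊢
      obtain ⟨l, hl, hx⟩ := hx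
      exact ⟨l + 1, by omega, hx⟩
    obtain ⟨a'', ha''⟩ := exists_realize_all_of_morley hsat hκ hMssmall qj hqjfs
      (fun k => E (k + 1)) E hEshift hEmor (ψ j0) a' hashift
    exact hdiv j0 E ⟨qj, hqjfs, hEmor⟩ hE0 ⟨a'', ha''⟩
  · intro hdiv
    exact ⟨1, fun _ => m, fun _ => φ, fun _ => b, fun _ => hdiv, fun a ha => ⟨0, ha⟩⟩

end Aux2

-- AUX END

/-- **Proposition 5.2.** In any complete first-order theory, Conant-forking
coincides with Conant-dividing for formulas, and Conant-independence
`⫝^{K*}` satisfies right extension. -/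
theorem conant_forking_eq_dividing_and_right_extension (L : FirstOrder.Language.{u, u})
    (𝕄 : Type u) [L.Structure 𝕄] (κ : Cardinal.{u}) (hmonster : IsMonster L 𝕄 κ)
    (Ms : Set 𝕄) (hMs : IsElemSubmodel L Ms) (hMssmall : Cardinal.mk Ms < κ) :
    (∀ (r m : ℕ) (φ : L.Formula (Fin r ⊕ Fin m)) (b : Fin m → 𝕄),
      ConantForks L Ms φ b ↔ ConantDivides L Ms φ b) ∧
    (∀ (α β γ : Type u), Cardinal.mk α < κ → Cardinal.mk β < κ → Cardinal.mk γ < κ →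
      ∀ (a : α → 𝕄) (b : β → 𝕄) (c : γ → 𝕄), ConantIndep L Ms a b →
        ∃ a' : α → 𝕄, EqTpOver L (Ms ∪ Set.range b) a' a ∧
          ConantIndep L Ms a' (Sum.elim b c)) := by
  constructor
  · intro r m φ b
    exact conantForks_iff_divides hmonster Ms hMs hMssmall r m φ b
  · intro α β γ hα hβ hγ a b c hind
    exact conantIndep_right_ext hmonster Ms hα hβ hγ hMssmall a b c hind

end NSOP2Paper
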